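/- arXiv:1703.08785 — 4 statements merged into one kernel-verified Lean document; each statement's English description precedes it below -/
import Mathlib

section
/- Let $r \ge 0$ be an integer and let $f$ be an arithmetic function such that for every $\varepsilon > 0$ one has $\sum_{n \le x} f(n) = \sum_{j=0}^{r} c_j (\log x)^j + O(x^{-1/2+\varepsilon})$ for some constants $c_0, \ldots, c_r$. Then for every positive integer $k$ there exist constants $C_0, \ldots, C_{k+r}$ such that for every $\varepsilon > 0$, $\sum_{n \le x} f(n) (\log(x/n))^k = \sum_{\ell=0}^{k+r} C_\ell (\log x)^{\ell} + O(x^{-1/2+\varepsilon})$; moreover, for $\ell \in \{k, k+1, \ldots, k+r\}$ the constants are given explicitly by $C_\ell = c_{\ell - k} \Big( 1 + (\ell - k) \sum_{i=1}^{k} \frac{(-1)^i}{\ell - k + i} \binom{k}{i} \Big)$. -/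
open Filter Finset MeasureTheory Asymptotics

noncomputable def SS (f : ℕ → ℝ) (x : ℝ) : ℝ := ∑ n ∈ Finset.Icc 1 ⌊x⌋₊, f n
noncomputable def PP (c : ℕ → ℝ) (r : ℕ) (x : ℝ) : ℝ :=
  ∑ j ∈ Finset.range (r+1), c j * Real.log x ^ j
noncomputable def EE (f c : ℕ → ℝ) (r : ℕ) (x : ℝ) : ℝ := SS f x - PP c r x
noncomputable def DD (i : ℕ) (t : ℝ) : ℝ := (i:ℝ) * Real.log t ^ (i-1) * t⁻¹
noncomputable def tailI (f c : ℕ → ℝ) (r i : ℕ) (x : ℝ) : ℝ :=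
  ∫ t in Set.Ioi x, DD i t * EE f c r t

lemma SS_meas (f : ℕ → ℝ) : Measurable (SS f) :=
  (measurable_from_top (f := fun n : ℕ => ∑ m ∈ Finset.Icc 1 n, f m)).comp Nat.measurable_floor

lemma EE_meas (f c : ℕ → ℝ) (r : ℕ) : Measurable (EE f c r) := by
  refine (SS_meas f).sub ?_
  exact Finset.measurable_sum _ fun j _ => (Real.measurable_log.pow_const _).const_mul _

lemma DDE_meas (f c : ℕ → ℝ) (r i : ℕ) : Measurable (fun t => DD i t * EE f c r t) := by
  refine Measurable.mul ?_ (EE_meas f c r)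
  exact ((Real.measurable_log.pow_const _).const_mul _).mul measurable_inv

-- log pow is big-O of any positive power
lemma logpow_isBigO (m : ℕ) {δ : ℝ} (hδ : 0 < δ) :
    (fun x : ℝ => Real.log x ^ m) =O[atTop] fun x => x ^ δ := by
  have h := isLittleO_log_rpow_rpow_atTop (m : ℝ) hδ
  refine h.isBigO.congr' ?_ EventuallyEq.rfl
  filter_upwards [eventually_ge_atTop (1:ℝ)] with x hx
  rw [Real.rpow_natCast]

section
variable {f c : ℕ → ℝ} {r : ℕ}
  (hE : ∀ ε > (0 : ℝ), EE f c r =O[atTop] fun x : ℝ => x ^ (-1/2 + ε))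

include hE in
lemma DDE_isBigO (i : ℕ) {δ : ℝ} (hδ : 0 < δ) :
    (fun t => DD i t * EE f c r t) =O[atTop] fun t : ℝ => t ^ (-3/2 + 2*δ) := by
  have h1 : (fun t : ℝ => (i:ℝ) * Real.log t ^ (i-1)) =O[atTop] fun t => t ^ δ :=
    (logpow_isBigO (i-1) hδ).const_mul_left _
  have h2 : (fun t : ℝ => t⁻¹) =O[atTop] fun t : ℝ => t ^ (-1:ℝ) := by
    refine IsBigO.of_bound 1 ?_
    filter_upwards [eventually_gt_atTop (0:ℝ)] with t ht
    rw [Real.rpow_neg_one, one_mul]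
  have h3 := hE δ hδ
  have h := (h1.mul h2).mul h3
  refine h.trans (EventuallyEq.isBigO ?_)
  filter_upwards [eventually_gt_atTop (0:ℝ)] with t ht
  rw [← Real.rpow_add ht, ← Real.rpow_add ht]
  ring_nf

include hE in
lemma integrableOn_DDE (i : ℕ) :
    IntegrableOn (fun t => DD i t * EE f c r t) (Set.Ioi 1) := by
  have hO := DDE_isBigO hE i (show (0:ℝ) < 1/16 by norm_num)
  rw [isBigO_iff] at hO
  obtain ⟨C, hC⟩ := hO
  rw [eventually_atTop] at hC
  obtain ⟨X₀, hX₀⟩ := hC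
  set X₁ : ℝ := max X₀ 2 with hX₁def
  have hX₁1 : (1:ℝ) ≤ X₁ := le_trans (by norm_num) (le_max_right _ _)
  have hX₁0 : (0:ℝ) < X₁ := lt_of_lt_of_le one_pos hX₁1
  have hsplit : Set.Ioi (1:ℝ) = Set.Ioc 1 X₁ ∪ Set.Ioi X₁ := (Set.Ioc_union_Ioi_eq_Ioi hX₁1).symm
  rw [hsplit]
  refine IntegrableOn.union ?_ ?_
  · -- bounded on Ioc 1 X₁
    have hbd : ∀ t ∈ Set.Ioc (1:ℝ) X₁,
        ‖DD i t * EE f c r t‖ ≤ ((i:ℝ) * Real.log X₁ ^ (i-1)) *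
          ((∑ n ∈ Finset.Icc 1 ⌊X₁⌋₊, |f n|) + ∑ j ∈ Finset.range (r+1), |c j| * Real.log X₁ ^ j) := by
      intro t ht
      have ht1 : (1:ℝ) ≤ t := le_of_lt ht.1
      have ht0 : (0:ℝ) < t := lt_of_lt_of_le one_pos ht1
      have hlog0 : 0 ≤ Real.log t := Real.log_nonneg ht1
      have hlogle : Real.log t ≤ Real.log X₁ := Real.log_le_log ht0 ht.2
      rw [norm_mul]
      refine mul_le_mul ?_ ?_ (norm_nonneg _) ?_
      · rw [DD]
        calc ‖(i:ℝ) * Real.log t ^ (i-1) * t⁻¹‖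
            ≤ ‖(i:ℝ) * Real.log t ^ (i-1)‖ * ‖t⁻¹‖ := norm_mul_le _ _
          _ ≤ ((i:ℝ) * Real.log X₁ ^ (i-1)) * 1 := by
              refine mul_le_mul ?_ ?_ (norm_nonneg _) ?_
              · rw [norm_mul, Real.norm_natCast, norm_pow, Real.norm_eq_abs,
                  abs_of_nonneg hlog0]
                exact mul_le_mul_of_nonneg_left (pow_le_pow_left₀ hlog0 hlogle _) (Nat.cast_nonneg _)
              · rw [norm_inv, Real.norm_eq_abs, abs_of_pos ht0]
                rw [inv_le_one_iff₀]; right; exact ht1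
              · exact mul_nonneg (Nat.cast_nonneg _) (pow_nonneg (Real.log_nonneg hX₁1) _)
          _ = (i:ℝ) * Real.log X₁ ^ (i-1) := mul_one _
      · rw [EE, Real.norm_eq_abs]
        refine (abs_sub _ _).trans (add_le_add ?_ ?_)
        · rw [SS]
          refine (Finset.abs_sum_le_sum_abs _ _).trans ?_
          refine Finset.sum_le_sum_of_subset_of_nonneg ?_ (fun n _ _ => abs_nonneg _)
          exact Finset.Icc_subset_Icc_right (Nat.floor_le_floor ht.2)
        · rw [PP]
          refine (Finset.abs_sum_le_sum_abs _ _).trans (Finset.sum_le_sum fun j _ => ?_)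
          rw [abs_mul, abs_pow, abs_of_nonneg hlog0]
          exact mul_le_mul_of_nonneg_left (pow_le_pow_left₀ hlog0 hlogle _) (abs_nonneg _)
      · exact mul_nonneg (Nat.cast_nonneg _) (pow_nonneg (Real.log_nonneg hX₁1) _)
    refine Integrable.mono' (g := fun _ => ((i:ℝ) * Real.log X₁ ^ (i-1)) *
      ((∑ n ∈ Finset.Icc 1 ⌊X₁⌋₊, |f n|) + ∑ j ∈ Finset.range (r+1), |c j| * Real.log X₁ ^ j))
      (integrableOn_const measure_Ioc_lt_top.ne)
      ((DDE_meas f c r i).aestronglyMeasurable.restrict) ?_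
    exact (ae_restrict_iff' measurableSet_Ioc).mpr (.of_forall hbd)
  · -- dominated on Ioi X₁
    refine Integrable.mono' (g := fun t => C * t ^ (-3/2 + 2*(1/16) : ℝ)) ?_
      ((DDE_meas f c r i).aestronglyMeasurable.restrict) ?_
    · exact (integrableOn_Ioi_rpow_of_lt (by norm_num) hX₁0).const_mul C
    · refine (ae_restrict_iff' measurableSet_Ioi).mpr (.of_forall fun t ht => ?_)
      have := hX₀ t (le_trans (le_max_left _ _) (le_of_lt ht))
      refine this.trans ?_
      have ht0 : (0:ℝ) < t := lt_trans hX₁0 ht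
      rw [Real.norm_rpow_of_nonneg ht0.le, Real.norm_eq_abs, abs_of_pos ht0]

include hE in
lemma tailI_split (i : ℕ) {x : ℝ} (hx : 1 ≤ x) :
    ∫ t in Set.Ioc 1 x, DD i t * EE f c r t = tailI f c r i 1 - tailI f c r i x := by
  have hsplit : Set.Ioc (1:ℝ) x ∪ Set.Ioi x = Set.Ioi 1 := Set.Ioc_union_Ioi_eq_Ioi hx
  have hint := integrableOn_DDE hE i
  have h1 : IntegrableOn (fun t => DD i t * EE f c r t) (Set.Ioc 1 x) :=
    hint.mono_set (by rw [← hsplit]; exact Set.subset_union_left)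
  have h2 : IntegrableOn (fun t => DD i t * EE f c r t) (Set.Ioi x) :=
    hint.mono_set (by rw [← hsplit]; exact Set.subset_union_right)
  have := setIntegral_union (Set.Ioc_disjoint_Ioi le_rfl) measurableSet_Ioi h1 h2
  rw [hsplit] at this
  rw [tailI, tailI, this]
  ring

include hE in
lemma tailI_isBigO (i : ℕ) {ε : ℝ} (hε : 0 < ε) :
    tailI f c r i =O[atTop] fun x : ℝ => x ^ (-1/2 + ε) := by
  set δ : ℝ := min ε 1 / 8 with hδdef
  have hδ : 0 < δ := by positivity
  have hδ8 : δ ≤ 1/8 := by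
    rw [hδdef]; exact div_le_div_of_nonneg_right (min_le_right _ _) (by norm_num) |>.trans (by norm_num)
  have hδε : 2*δ ≤ ε := by
    rw [hδdef]
    have : min ε 1 ≤ ε := min_le_left _ _
    linarith
  have hO := DDE_isBigO hE i hδ
  rw [isBigO_iff] at hO
  obtain ⟨C, hC⟩ := hO
  rw [eventually_atTop] at hC
  obtain ⟨X₀, hX₀⟩ := hC
  set X₁ : ℝ := max X₀ 1 with hX₁def
  have hX₁1 : (1:ℝ) ≤ X₁ := le_max_right _ _
  have hX₁0 : (0:ℝ) < X₁ := lt_of_lt_of_le one_pos hX₁1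
  have hC0 : 0 ≤ C := by
    have h3 := hX₀ X₁ (le_max_left _ _)
    have h2 : (0:ℝ) < X₁ ^ (-3/2 + 2*δ : ℝ) := Real.rpow_pos_of_pos hX₁0 _
    have h4 : ‖X₁ ^ (-3/2 + 2*δ : ℝ)‖ = X₁ ^ (-3/2 + 2*δ : ℝ) := by
      rw [Real.norm_rpow_of_nonneg hX₁0.le, Real.norm_eq_abs, abs_of_pos hX₁0]
    rw [h4] at h3
    nlinarith [norm_nonneg (DD i X₁ * EE f c r X₁)]
  rw [isBigO_iff]
  refine ⟨C / (1/2 - 2*δ), ?_⟩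
  rw [eventually_atTop]
  refine ⟨X₁, fun x hx => ?_⟩
  have hx1 : (1:ℝ) ≤ x := hX₁1.trans hx
  have hx0 : (0:ℝ) < x := lt_of_lt_of_le one_pos hx1
  have hbound : ‖tailI f c r i x‖ ≤ ∫ t in Set.Ioi x, C * t ^ (-3/2 + 2*δ : ℝ) := by
    refine norm_integral_le_of_norm_le ((integrableOn_Ioi_rpow_of_lt (by linarith) hx0).const_mul C) ?_
    refine (ae_restrict_iff' measurableSet_Ioi).mpr (.of_forall fun t ht => ?_)
    have ht0 : (0:ℝ) < t := lt_trans hx0 ht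
    have := hX₀ t ((le_trans (le_max_left _ _) hx).trans (le_of_lt ht))
    refine this.trans ?_
    rw [Real.norm_rpow_of_nonneg ht0.le, Real.norm_eq_abs, abs_of_pos ht0]
  have hval : ∫ t in Set.Ioi x, C * t ^ (-3/2 + 2*δ : ℝ)
      = C / (1/2 - 2*δ) * x ^ (-1/2 + 2*δ : ℝ) := by
    rw [MeasureTheory.integral_const_mul, integral_Ioi_rpow_of_lt (by linarith) hx0]
    have : (-3/2 + 2*δ : ℝ) + 1 = -1/2 + 2*δ := by ring
    rw [this]
    field_simp [show (-1/2 + 2*δ:ℝ) ≠ 0 from by linarith, show (1/2 - 2*δ:ℝ) ≠ 0 from by linarith]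
    rw [show (-1 + 2^2*δ : ℝ) = -(1 - 2^2*δ) by ring, div_neg]
    ring
  refine hbound.trans ?_
  rw [hval]
  have hmono : x ^ (-1/2 + 2*δ : ℝ) ≤ x ^ (-1/2 + ε : ℝ) :=
    Real.rpow_le_rpow_of_exponent_le hx1 (by linarith)
  have hnorm : ‖x ^ (-1/2 + ε : ℝ)‖ = x ^ (-1/2 + ε : ℝ) := by
    rw [Real.norm_rpow_of_nonneg hx0.le, Real.norm_eq_abs, abs_of_pos hx0]
  rw [hnorm]
  have hpos : 0 ≤ C / (1/2 - 2*δ) := by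
    apply div_nonneg hC0; linarith
  exact mul_le_mul_of_nonneg_left hmono hpos
end

lemma sum_c'_eq (f : ℕ → ℝ) (m : ℕ) :
    ∑ n ∈ Finset.Icc 0 m, (if n = 0 then 0 else f n) = ∑ n ∈ Finset.Icc 1 m, f n := by
  rw [Finset.Icc_eq_cons_Ioc (Nat.zero_le m), Finset.sum_cons, if_pos rfl, zero_add,
    ← Finset.Icc_add_one_left_eq_Ioc]
  exact Finset.sum_congr rfl fun n hn => if_neg (by have := (Finset.mem_Icc.mp hn).1; omega)

lemma sum_c'_eq2 (f : ℕ → ℝ) (i m : ℕ) :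
    ∑ n ∈ Finset.Icc 0 m, Real.log n ^ i * (if n = 0 then 0 else f n)
      = ∑ n ∈ Finset.Icc 1 m, f n * Real.log n ^ i := by
  rw [Finset.Icc_eq_cons_Ioc (Nat.zero_le m), Finset.sum_cons, if_pos rfl, mul_zero, zero_add,
    ← Finset.Icc_add_one_left_eq_Ioc]
  refine Finset.sum_congr rfl fun n hn => ?_
  rw [if_neg (by have := (Finset.mem_Icc.mp hn).1; omega : ¬ n = 0)]
  ring

lemma abel_step (f : ℕ → ℝ) (i : ℕ) {x : ℝ} (hx : 1 ≤ x) :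
    ∑ n ∈ Finset.Icc 1 ⌊x⌋₊, f n * Real.log n ^ i
      = Real.log x ^ i * SS f x - ∫ t in Set.Ioc 1 x, DD i t * SS f t := by
  have hne : ∀ t : ℝ, t ∈ Set.Icc (1:ℝ) x → t ≠ 0 := by
    intro t ht
    have := ht.1; positivity
  have hdiff : ∀ t ∈ Set.Icc (1:ℝ) x, DifferentiableAt ℝ (fun t => Real.log t ^ i) t :=
    fun t ht => ((Real.hasDerivAt_log (hne t ht)).pow i).differentiableAt
  have hderiv : ∀ t ∈ Set.Icc (1:ℝ) x, deriv (fun t => Real.log t ^ i) t = DD i t :=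
    fun t ht => ((Real.hasDerivAt_log (hne t ht)).pow i).deriv
  have hmem : ∀ t : ℝ, t ∈ Set.Icc (1:ℝ) x → t ∈ ({0}ᶜ : Set ℝ) := by
    intro t ht
    simp only [Set.mem_compl_iff, Set.mem_singleton_iff]
    exact hne t ht
  have hcont : ContinuousOn (DD i) (Set.Icc (1:ℝ) x) := by
    refine ContinuousOn.mul (ContinuousOn.mul continuousOn_const ?_) ?_
    · exact (Real.continuousOn_log.mono hmem).pow _
    · exact continuousOn_inv₀.mono hmem
  have hint : IntegrableOn (deriv (fun t => Real.log t ^ i)) (Set.Icc 1 x) :=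
    (hcont.integrableOn_Icc).congr_fun (fun t ht => (hderiv t ht).symm) measurableSet_Icc
  have h := sum_mul_eq_sub_integral_mul₀ (fun n => if n = 0 then (0:ℝ) else f n)
    (if_pos rfl) x hdiff hint
  rw [sum_c'_eq2, sum_c'_eq] at h
  rw [h]
  unfold SS
  congr 1
  refine setIntegral_congr_fun measurableSet_Ioc fun t ht => ?_
  rw [hderiv t (Set.Ioc_subset_Icc_self ht), sum_c'_eq f ⌊t⌋₊]

lemma ftc_step (c : ℕ → ℝ) (r i : ℕ) {x : ℝ} (hx : 1 ≤ x) :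
    ∫ t in Set.Ioc 1 x, DD i t * PP c r t
      = ∑ j ∈ Finset.range (r+1), c j * ((i:ℝ)/((j:ℝ)+(i:ℝ))) * Real.log x ^ (j+i) := by
  rw [← intervalIntegral.integral_of_le hx]
  have hsplit : ∀ t : ℝ, DD i t * PP c r t
      = ∑ j ∈ Finset.range (r+1), (c j * Real.log t ^ j) * DD i t := by
    intro t; rw [PP, Finset.mul_sum]
    exact Finset.sum_congr rfl fun j _ => by ring
  simp_rw [hsplit]
  have hmem : ∀ t : ℝ, t ∈ Set.uIcc (1:ℝ) x → t ∈ ({0}ᶜ : Set ℝ) := by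
    intro t ht
    rw [Set.uIcc_of_le hx] at ht
    simp only [Set.mem_compl_iff, Set.mem_singleton_iff]
    have := ht.1; positivity
  have hii : ∀ j : ℕ, IntervalIntegrable (fun t => (c j * Real.log t ^ j) * DD i t) volume 1 x := by
    intro j
    apply ContinuousOn.intervalIntegrable
    refine ContinuousOn.mul (ContinuousOn.mul continuousOn_const
      ((Real.continuousOn_log.mono hmem).pow _)) ?_
    exact ContinuousOn.mul (ContinuousOn.mul continuousOn_const
      ((Real.continuousOn_log.mono hmem).pow _)) (continuousOn_inv₀.mono hmem)
  rw [intervalIntegral.integral_finset_sum (fun j _ => hii j)]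
  refine Finset.sum_congr rfl fun j _ => ?_
  rcases Nat.eq_zero_or_pos i with hi | hi
  · subst hi
    simp [DD]
  · have hji : ((j:ℝ) + (i:ℝ)) ≠ 0 := by positivity
    have hderiv : ∀ t ∈ Set.uIcc (1:ℝ) x,
        HasDerivAt (fun t => c j * ((i:ℝ)/((j:ℝ)+(i:ℝ))) * Real.log t ^ (j+i))
          ((c j * Real.log t ^ j) * DD i t) t := by
      intro t ht
      have ht0 : t ≠ 0 := hmem t ht
      have h := (((Real.hasDerivAt_log ht0).fun_pow (j+i)).const_mul
        (c j * ((i:ℝ)/((j:ℝ)+(i:ℝ)))))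
      refine h.congr_deriv ?_
      rw [DD]
      have hpow : Real.log t ^ (i-1) * Real.log t ^ j = Real.log t ^ (j + i - 1) := by
        rw [← pow_add]; congr 1; omega
      push_cast
      field_simp
      rw [← hpow]
      ring
    rw [intervalIntegral.integral_eq_sub_of_hasDerivAt hderiv (hii j)]
    rw [Real.log_one, zero_pow (by omega : j + i ≠ 0)]
    ring

section
variable {f c : ℕ → ℝ} {r : ℕ}
  (hE : ∀ ε > (0 : ℝ), EE f c r =O[atTop] fun x : ℝ => x ^ (-1/2 + ε))

include hE in
lemma A_decomp (i : ℕ) {x : ℝ} (hx : 1 ≤ x) :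
    ∑ n ∈ Finset.Icc 1 ⌊x⌋₊, f n * Real.log n ^ i
      = ((∑ j ∈ Finset.range (r+1), c j * (1 - (i:ℝ)/((j:ℝ)+(i:ℝ))) * Real.log x ^ (j+i))
          - tailI f c r i 1)
        + (EE f c r x * Real.log x ^ i + tailI f c r i x) := by
  have hSP : ∀ t : ℝ, SS f t = PP c r t + EE f c r t := fun t => by unfold EE; ring
  have hmem : ∀ t : ℝ, t ∈ Set.Icc (1:ℝ) x → t ∈ ({0}ᶜ : Set ℝ) := by
    intro t ht
    simp only [Set.mem_compl_iff, Set.mem_singleton_iff]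
    have := ht.1; positivity
  have hcontD : ContinuousOn (DD i) (Set.Icc (1:ℝ) x) := by
    refine ContinuousOn.mul (ContinuousOn.mul continuousOn_const ?_) ?_
    · exact (Real.continuousOn_log.mono hmem).pow _
    · exact continuousOn_inv₀.mono hmem
  have hcontP : ContinuousOn (PP c r) (Set.Icc (1:ℝ) x) := by
    unfold PP
    refine continuousOn_finset_sum _ fun j _ => ?_
    exact ContinuousOn.mul continuousOn_const ((Real.continuousOn_log.mono hmem).pow _)
  have hintP : IntegrableOn (fun t => DD i t * PP c r t) (Set.Ioc 1 x) :=
    ((hcontD.mul hcontP).integrableOn_Icc).mono_set Set.Ioc_subset_Icc_self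
  have hintE : IntegrableOn (fun t => DD i t * EE f c r t) (Set.Ioc 1 x) :=
    (integrableOn_DDE hE i).mono_set (Set.Ioc_subset_Ioi_self)
  have hsplitI : ∫ t in Set.Ioc 1 x, DD i t * SS f t
      = (∫ t in Set.Ioc 1 x, DD i t * PP c r t) + ∫ t in Set.Ioc 1 x, DD i t * EE f c r t := by
    rw [← MeasureTheory.integral_add hintP hintE]
    refine integral_congr_ae (.of_forall fun t => ?_)
    show DD i t * SS f t = DD i t * PP c r t + DD i t * EE f c r t
    rw [hSP t]; ring
  rw [abel_step f i hx, hsplitI, ftc_step c r i hx, tailI_split hE i hx, hSP x]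
  have key : Real.log x ^ i * PP c r x = ∑ j ∈ Finset.range (r+1), c j * Real.log x ^ (j+i) := by
    unfold PP
    rw [Finset.mul_sum]
    exact Finset.sum_congr rfl fun j _ => by rw [pow_add]; ring
  have key2 : ∑ j ∈ Finset.range (r+1), c j * (1 - (i:ℝ)/((j:ℝ)+(i:ℝ))) * Real.log x ^ (j+i)
      = (∑ j ∈ Finset.range (r+1), c j * Real.log x ^ (j+i))
        - ∑ j ∈ Finset.range (r+1), c j * ((i:ℝ)/((j:ℝ)+(i:ℝ))) * Real.log x ^ (j+i) := by
    rw [← Finset.sum_sub_distrib]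
    exact Finset.sum_congr rfl fun j _ => by ring
  rw [mul_add, key, key2]
  ring

lemma W_eq (k : ℕ) (hk : 0 < k) (j : ℕ) :
    ∑ i ∈ Finset.range (k+1), (-1:ℝ)^i * (k.choose i : ℝ) * (1 - (i:ℝ)/((j:ℝ)+(i:ℝ)))
      = 1 + (j:ℝ) * ∑ i ∈ Finset.Icc 1 k, (-1:ℝ)^i / ((j + i : ℕ):ℝ) * (k.choose i : ℝ) := by
  rw [Finset.sum_range_succ']
  have h0 : (-1:ℝ)^0 * (k.choose 0 : ℝ) * (1 - ((0:ℕ):ℝ)/((j:ℝ)+((0:ℕ):ℝ))) = 1 := by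
    norm_num
  rw [h0, add_comm]
  congr 1
  rw [show Finset.Icc 1 k = Finset.Ico 1 (k+1) from (Finset.Ico_add_one_right_eq_Icc 1 k).symm,
    Finset.sum_Ico_eq_sum_range]
  simp only [add_tsub_cancel_right]
  rw [Finset.mul_sum]
  refine Finset.sum_congr rfl fun i _ => ?_
  have hji : ((j:ℝ) + ((1+i:ℕ):ℝ)) ≠ 0 := by positivity
  have hcast : ((j + (1+i) : ℕ):ℝ) = (j:ℝ) + ((1+i:ℕ):ℝ) := by push_cast; ring
  rw [show i + 1 = 1 + i from by omega] at *
  rw [hcast]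
  field_simp
  ring

end

/-- First part of Lemma 1: if
`∑_{n ≤ x} f n = ∑_{j=0}^r c_j (log x)^j + O(x^{-1/2+ε})` for every `ε > 0`, then for
every `k ≥ 1` there are constants `C_0, …, C_{k+r}` with
`∑_{n ≤ x} f n (log (x/n))^k = ∑_{ℓ=0}^{k+r} C_ℓ (log x)^ℓ + O(x^{-1/2+ε})`, and for
`k ≤ ℓ ≤ k + r` the constants are given by the explicit formula. -/
theorem sum_mul_log_pow_asymptotic (r : ℕ) (f : ℕ → ℝ) (c : ℕ → ℝ)
    (hf : ∀ ε > (0 : ℝ),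
      (fun x : ℝ => (∑ n ∈ Finset.Icc 1 ⌊x⌋₊, f n) -
          ∑ j ∈ Finset.range (r + 1), c j * Real.log x ^ j)
        =O[atTop] fun x : ℝ => x ^ (-1 / 2 + ε)) :
    ∀ k : ℕ, 0 < k → ∃ C : ℕ → ℝ,
      (∀ ℓ ∈ Finset.Icc k (k + r),
        C ℓ = c (ℓ - k) * (1 + ((ℓ - k : ℕ) : ℝ) *
          ∑ i ∈ Finset.Icc 1 k, (-1 : ℝ) ^ i / ((ℓ - k + i : ℕ) : ℝ) * (k.choose i : ℝ))) ∧
      ∀ ε > (0 : ℝ),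
        (fun x : ℝ => (∑ n ∈ Finset.Icc 1 ⌊x⌋₊, f n * Real.log (x / (n : ℝ)) ^ k) -
            ∑ ℓ ∈ Finset.range (k + r + 1), C ℓ * Real.log x ^ ℓ)
          =O[atTop] fun x : ℝ => x ^ (-1 / 2 + ε) := by
  intro k hk
  have hE : ∀ ε > (0 : ℝ), EE f c r =O[atTop] fun x : ℝ => x ^ (-1/2 + ε) := by
    intro ε hε
    have heq : EE f c r = fun x : ℝ => (∑ n ∈ Finset.Icc 1 ⌊x⌋₊, f n) -
        ∑ j ∈ Finset.range (r + 1), c j * Real.log x ^ j := rfl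
    rw [heq]
    exact hf ε hε
  refine ⟨fun ℓ => (∑ j ∈ Finset.range (r+1),
        if ℓ = j + k then c j * (∑ i ∈ Finset.range (k+1),
          (-1:ℝ)^i * (k.choose i : ℝ) * (1 - (i:ℝ)/((j:ℝ)+(i:ℝ)))) else 0)
      + (∑ i ∈ Finset.Icc 1 k,
          if ℓ = k - i then -((-1:ℝ)^i * (k.choose i : ℝ) * tailI f c r i 1) else 0),
    fun ℓ hℓ => ?_, fun ε hε => ?_⟩
  · -- explicit formula
    beta_reduce
    obtain ⟨h1, h2⟩ := Finset.mem_Icc.mp hℓ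
    have hzero : (∑ i ∈ Finset.Icc 1 k,
        if ℓ = k - i then -((-1:ℝ)^i * (k.choose i : ℝ) * tailI f c r i 1) else 0) = 0 := by
      refine Finset.sum_eq_zero fun i hi => ?_
      obtain ⟨hi1, hi2⟩ := Finset.mem_Icc.mp hi
      exact if_neg (by omega)
    rw [hzero, add_zero]
    rw [Finset.sum_congr rfl (fun j _ => if_congr (by omega : (ℓ = j + k) ↔ (j = ℓ - k)) rfl rfl),
      Finset.sum_ite_eq' (Finset.range (r+1)) (ℓ-k), if_pos (Finset.mem_range.mpr (by omega))]
    rw [W_eq k hk (ℓ-k)]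
  · -- asymptotic
    have hIdent : ∀ x : ℝ, 1 ≤ x →
        (∑ n ∈ Finset.Icc 1 ⌊x⌋₊, f n * Real.log (x / (n : ℝ)) ^ k) -
          (∑ ℓ ∈ Finset.range (k + r + 1), ((∑ j ∈ Finset.range (r+1),
            if ℓ = j + k then c j * (∑ i ∈ Finset.range (k+1),
              (-1:ℝ)^i * (k.choose i : ℝ) * (1 - (i:ℝ)/((j:ℝ)+(i:ℝ)))) else 0)
            + (∑ i ∈ Finset.Icc 1 k,
              if ℓ = k - i then -((-1:ℝ)^i * (k.choose i : ℝ) * tailI f c r i 1) else 0))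
                * Real.log x ^ ℓ)
        = ∑ i ∈ Finset.range (k+1),
            (-1:ℝ)^i * (k.choose i : ℝ) * (Real.log x ^ (k-i) * tailI f c r i x) := by
      intro x hx
      have hx0 : (0:ℝ) < x := lt_of_lt_of_le one_pos hx
      -- Step A : binomial expansion
      have hT : ∑ n ∈ Finset.Icc 1 ⌊x⌋₊, f n * Real.log (x / (n : ℝ)) ^ k
          = ∑ i ∈ Finset.range (k+1), (-1:ℝ)^i * (k.choose i : ℝ) * Real.log x ^ (k-i)
              * (∑ n ∈ Finset.Icc 1 ⌊x⌋₊, f n * Real.log n ^ i) := by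
        have h1 : ∀ n ∈ Finset.Icc 1 ⌊x⌋₊, f n * Real.log (x / (n : ℝ)) ^ k
            = ∑ i ∈ Finset.range (k+1),
                f n * Real.log n ^ i * ((-1:ℝ)^i * (k.choose i : ℝ) * Real.log x ^ (k-i)) := by
          intro n hn
          have hn1 : 1 ≤ n := (Finset.mem_Icc.mp hn).1
          have hnR : ((n:ℝ)) ≠ 0 := Nat.cast_ne_zero.mpr (by omega)
          rw [Real.log_div (ne_of_gt hx0) hnR]
          rw [show Real.log x - Real.log n = -Real.log n + Real.log x from by ring]
          rw [add_pow, Finset.mul_sum]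
          refine Finset.sum_congr rfl fun i _ => ?_
          rw [neg_pow]
          ring
        rw [Finset.sum_congr rfl h1, Finset.sum_comm]
        refine Finset.sum_congr rfl fun i _ => ?_
        rw [Finset.mul_sum]
        refine Finset.sum_congr rfl fun n _ => ?_
        ring
      -- Step B : plug in A_decomp
      have hA : ∀ i ∈ Finset.range (k+1),
          (-1:ℝ)^i * (k.choose i : ℝ) * Real.log x ^ (k-i)
            * (∑ n ∈ Finset.Icc 1 ⌊x⌋₊, f n * Real.log n ^ i)
          = (-1:ℝ)^i * (k.choose i : ℝ) * Real.log x ^ (k-i)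
            * (((∑ j ∈ Finset.range (r+1),
                c j * (1 - (i:ℝ)/((j:ℝ)+(i:ℝ))) * Real.log x ^ (j+i)) - tailI f c r i 1)
              + (EE f c r x * Real.log x ^ i + tailI f c r i x)) := by
        intro i _
        rw [A_decomp hE i hx]
      rw [hT, Finset.sum_congr rfl hA]
      -- Step C : algebra
      have hW0 : ∑ i ∈ Finset.range (k+1), (-1:ℝ)^i * (k.choose i : ℝ) = 0 := by
        have h := Int.alternating_sum_range_choose (n := k)
        rw [if_neg hk.ne'] at h
        have : ((∑ m ∈ Finset.range (k + 1), (-1:ℤ) ^ m * ↑(k.choose m) : ℤ) : ℝ) = ((0:ℤ):ℝ) := by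
          rw [h]
        push_cast at this
        exact this
      have hT0 : tailI f c r 0 1 = 0 := by
        unfold tailI DD
        norm_num
      -- expand the sum of products
      have hsplit : ∑ i ∈ Finset.range (k+1), (-1:ℝ)^i * (k.choose i : ℝ) * Real.log x ^ (k-i)
            * (((∑ j ∈ Finset.range (r+1),
                c j * (1 - (i:ℝ)/((j:ℝ)+(i:ℝ))) * Real.log x ^ (j+i)) - tailI f c r i 1)
              + (EE f c r x * Real.log x ^ i + tailI f c r i x))
          = ((∑ i ∈ Finset.range (k+1), ∑ j ∈ Finset.range (r+1),
              (-1:ℝ)^i * (k.choose i : ℝ) * (c j * (1 - (i:ℝ)/((j:ℝ)+(i:ℝ))))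
                * Real.log x ^ (j+k))
             - ∑ i ∈ Finset.range (k+1),
                (-1:ℝ)^i * (k.choose i : ℝ) * tailI f c r i 1 * Real.log x ^ (k-i))
            + ((EE f c r x * Real.log x ^ k)
                * ∑ i ∈ Finset.range (k+1), (-1:ℝ)^i * (k.choose i : ℝ)
              + ∑ i ∈ Finset.range (k+1),
                  (-1:ℝ)^i * (k.choose i : ℝ) * (Real.log x ^ (k-i) * tailI f c r i x)) := by
        rw [Finset.mul_sum, ← Finset.sum_add_distrib, ← Finset.sum_sub_distrib,
          ← Finset.sum_add_distrib]
        refine Finset.sum_congr rfl fun i hi => ?_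
        have hik : i ≤ k := by
          have := Finset.mem_range.mp hi; omega
        have hpow1 : ∀ j : ℕ, Real.log x ^ (k-i) * Real.log x ^ (j+i) = Real.log x ^ (j+k) := by
          intro j
          rw [← pow_add]
          congr 1
          omega
        have hpow2 : Real.log x ^ (k-i) * Real.log x ^ i = Real.log x ^ k := by
          rw [← pow_add]
          congr 1
          omega
        have hmain : ∑ j ∈ Finset.range (r+1),
            (-1:ℝ)^i * (k.choose i : ℝ) * (c j * (1 - (i:ℝ)/((j:ℝ)+(i:ℝ))))
                * Real.log x ^ (j+k)
            = (-1:ℝ)^i * (k.choose i : ℝ) * Real.log x ^ (k-i)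
              * ∑ j ∈ Finset.range (r+1),
                  c j * (1 - (i:ℝ)/((j:ℝ)+(i:ℝ))) * Real.log x ^ (j+i) := by
          rw [Finset.mul_sum]
          refine Finset.sum_congr rfl fun j _ => ?_
          rw [← hpow1 j]
          ring
        rw [hmain, ← hpow2]
        ring
      rw [hsplit, hW0, mul_zero, zero_add]
      -- now handle the C-sum
      have hCsum : ∑ ℓ ∈ Finset.range (k + r + 1), ((∑ j ∈ Finset.range (r+1),
            if ℓ = j + k then c j * (∑ i ∈ Finset.range (k+1),
              (-1:ℝ)^i * (k.choose i : ℝ) * (1 - (i:ℝ)/((j:ℝ)+(i:ℝ)))) else 0)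
            + (∑ i ∈ Finset.Icc 1 k,
              if ℓ = k - i then -((-1:ℝ)^i * (k.choose i : ℝ) * tailI f c r i 1) else 0))
                * Real.log x ^ ℓ
          = (∑ i ∈ Finset.range (k+1), ∑ j ∈ Finset.range (r+1),
              (-1:ℝ)^i * (k.choose i : ℝ) * (c j * (1 - (i:ℝ)/((j:ℝ)+(i:ℝ))))
                * Real.log x ^ (j+k))
            - ∑ i ∈ Finset.range (k+1),
                (-1:ℝ)^i * (k.choose i : ℝ) * tailI f c r i 1 * Real.log x ^ (k-i) := by
        simp_rw [add_mul, Finset.sum_add_distrib, Finset.sum_mul]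
        rw [Finset.sum_comm (s := Finset.range (k+r+1)),
          Finset.sum_comm (s := Finset.range (k+r+1))]
        congr 1
        · -- main part
          rw [Finset.sum_comm (s := Finset.range (k+1)) (t := Finset.range (r+1))]
          refine Finset.sum_congr rfl fun j hj => ?_
          have hjr : j ≤ r := by have := Finset.mem_range.mp hj; omega
          have hinner : ∑ ℓ ∈ Finset.range (k+r+1),
              (if ℓ = j + k then c j * (∑ i ∈ Finset.range (k+1),
                (-1:ℝ)^i * (k.choose i : ℝ) * (1 - (i:ℝ)/((j:ℝ)+(i:ℝ)))) else 0)
                  * Real.log x ^ ℓ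
              = c j * (∑ i ∈ Finset.range (k+1),
                  (-1:ℝ)^i * (k.choose i : ℝ) * (1 - (i:ℝ)/((j:ℝ)+(i:ℝ))))
                * Real.log x ^ (j+k) := by
            simp_rw [ite_mul, zero_mul]
            rw [Finset.sum_ite_eq' (Finset.range (k+r+1)) (j+k),
              if_pos (Finset.mem_range.mpr (by omega))]
          rw [hinner, Finset.mul_sum, Finset.sum_mul]
          refine Finset.sum_congr rfl fun i _ => ?_
          ring
        · -- tail part
          have hinner : ∀ i ∈ Finset.Icc 1 k, (∑ ℓ ∈ Finset.range (k+r+1),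
              (if ℓ = k - i then -((-1:ℝ)^i * (k.choose i : ℝ) * tailI f c r i 1) else 0)
                * Real.log x ^ ℓ)
              = -((-1:ℝ)^i * (k.choose i : ℝ) * tailI f c r i 1) * Real.log x ^ (k-i) := by
            intro i _
            simp_rw [ite_mul, zero_mul]
            rw [Finset.sum_ite_eq' (Finset.range (k+r+1)) (k-i),
              if_pos (Finset.mem_range.mpr (by omega))]
          rw [Finset.sum_congr rfl hinner]
          have hext : ∑ i ∈ Finset.range (k+1),
              (-1:ℝ)^i * (k.choose i : ℝ) * tailI f c r i 1 * Real.log x ^ (k-i)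
              = (-1:ℝ)^0 * (k.choose 0 : ℝ) * tailI f c r 0 1 * Real.log x ^ (k-0)
                + ∑ i ∈ Finset.Icc 1 k,
                  (-1:ℝ)^i * (k.choose i : ℝ) * tailI f c r i 1 * Real.log x ^ (k-i) := by
            rw [Finset.range_eq_Ico, Finset.sum_eq_sum_Ico_succ_bot (by omega : 0 < k+1),
              Finset.Ico_add_one_right_eq_Icc]
          rw [hext, hT0]
          simp only [mul_zero, zero_mul, zero_add]
          rw [← Finset.sum_neg_distrib]
          exact Finset.sum_congr rfl fun i _ => by ring
      rw [hCsum]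
      ring
    -- now the asymptotics
    have htail : ∀ i : ℕ, (fun x : ℝ => Real.log x ^ (k-i) * tailI f c r i x)
        =O[atTop] fun x : ℝ => x ^ (-1/2 + ε) := by
      intro i
      have h1 := logpow_isBigO (k-i) (show 0 < ε/2 by linarith)
      have h2 := tailI_isBigO hE i (show 0 < ε/2 by linarith)
      refine (h1.mul h2).trans (EventuallyEq.isBigO ?_)
      filter_upwards [eventually_gt_atTop (0:ℝ)] with t ht
      rw [← Real.rpow_add ht]
      ring_nf
    have hsum : (fun x : ℝ => ∑ i ∈ Finset.range (k+1),
        (-1:ℝ)^i * (k.choose i : ℝ) * (Real.log x ^ (k-i) * tailI f c r i x))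
        =O[atTop] fun x : ℝ => x ^ (-1/2 + ε) :=
      IsBigO.fun_sum fun i _ => ((htail i).const_mul_left _)
    refine hsum.congr' ?_ (EventuallyEq.rfl)
    filter_upwards [eventually_ge_atTop (1:ℝ)] with x hx
    exact (hIdent x hx).symm
end

section
/- Let $r \ge t \ge 1$ be integers and let $f$ be an arithmetic function such that $\sum_{n \le x} f(n) = \sum_{j=t}^{r} c_j (\log x)^j + O((\log x)^{t-1})$ for some constants $c_t, \ldots, c_r$. Then for every positive integer $k$ there exist constants $C_{k+t}, \ldots, C_{k+r}$ such that $\sum_{n \le x} f(n)(\log(x/n))^k = \sum_{j=k+t}^{k+r} C_j (\log x)^j + O((\log x)^{t+k-1})$, where for each $j$, $C_j = c_{j-k} \Big( 1 + (j-k) \sum_{i=1}^{k} \frac{(-1)^i}{j-k+i} \binom{k}{i} \Big)$. -/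
open Filter Finset intervalIntegral MeasureTheory

/- Auxiliary lemmas -/

lemma contOn_log_pow_div (m : ℕ) {x : ℝ} (hx : 1 ≤ x) :
    ContinuousOn (fun u => Real.log u ^ m / u) (Set.uIcc (1:ℝ) x) := by
  rw [Set.uIcc_of_le hx]
  apply ContinuousOn.div
  · exact (Real.continuousOn_log.mono (fun u hu =>
      Set.mem_compl_singleton_iff.mpr (lt_of_lt_of_le one_pos hu.1).ne')).pow m
  · exact continuousOn_id
  · intro u hu
    exact (lt_of_lt_of_le one_pos hu.1).ne'

lemma my_integral_log_pow (m : ℕ) {x : ℝ} (hx : 1 ≤ x) :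
    ∫ u in (1:ℝ)..x, Real.log u ^ m / u = Real.log x ^ (m + 1) / (m + 1) := by
  have h : ∀ u ∈ Set.uIcc (1:ℝ) x, HasDerivAt (fun u => Real.log u ^ (m+1) / (m+1))
      (Real.log u ^ m / u) u := by
    intro u hu
    rw [Set.uIcc_of_le hx] at hu
    have hu0 : (0:ℝ) < u := lt_of_lt_of_le one_pos hu.1
    have := ((Real.hasDerivAt_log hu0.ne').fun_pow (m+1)).div_const ((m:ℝ)+1)
    refine this.congr_deriv ?_
    push_cast
    field_simp
  rw [integral_eq_sub_of_hasDerivAt h (contOn_log_pow_div m hx).intervalIntegrable]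
  simp [Real.log_one, zero_pow (Nat.succ_ne_zero m)]

lemma contOn_sub_log (m : ℕ) (c : ℝ) {a b : ℝ} (ha : 0 < a) (hab : a ≤ b) :
    ContinuousOn (fun u => ((m:ℝ)+1) * (c - Real.log u) ^ m / u) (Set.uIcc a b) := by
  rw [Set.uIcc_of_le hab]
  apply ContinuousOn.div
  · exact continuousOn_const.mul ((continuousOn_const.sub (Real.continuousOn_log.mono
      (fun u hu => Set.mem_compl_singleton_iff.mpr (lt_of_lt_of_le ha hu.1).ne'))).pow m)
  · exact continuousOn_id
  · intro u hu
    exact (lt_of_lt_of_le ha hu.1).ne'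

lemma contOn_pow_mul (j m : ℕ) {x : ℝ} (hx : 1 ≤ x) :
    ContinuousOn (fun u => Real.log u ^ j * (((m:ℝ)+1) * (Real.log x - Real.log u) ^ m / u))
      (Set.uIcc (1:ℝ) x) := by
  refine ContinuousOn.mul ?_ (contOn_sub_log m (Real.log x) one_pos hx)
  rw [Set.uIcc_of_le hx]
  exact (Real.continuousOn_log.mono (fun u hu =>
    Set.mem_compl_singleton_iff.mpr (lt_of_lt_of_le one_pos hu.1).ne')).pow j

lemma my_integral_sub_log_pow (m : ℕ) (c : ℝ) {a b : ℝ} (ha : 0 < a) (hab : a ≤ b) :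
    ∫ u in a..b, ((m:ℝ)+1) * (c - Real.log u) ^ m / u
      = (c - Real.log a) ^ (m+1) - (c - Real.log b) ^ (m+1) := by
  have h : ∀ u ∈ Set.uIcc a b, HasDerivAt (fun u => -(c - Real.log u) ^ (m+1))
      (((m:ℝ)+1) * (c - Real.log u) ^ m / u) u := by
    intro u hu
    rw [Set.uIcc_of_le hab] at hu
    have hu0 : (0:ℝ) < u := lt_of_lt_of_le ha hu.1
    have := (((hasDerivAt_const u c).fun_sub (Real.hasDerivAt_log hu0.ne')).fun_pow (m+1)).fun_neg
    refine this.congr_deriv ?_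
    push_cast
    field_simp
    ring
  rw [integral_eq_sub_of_hasDerivAt h (contOn_sub_log m c ha hab).intervalIntegrable]
  ring

lemma my_comb (m j : ℕ) (hj : 1 ≤ j) :
    1 + (j:ℝ) * ∑ i ∈ Icc 1 (m+1), (-1:ℝ)^i / ((j:ℝ)+i) * (((m+1).choose i : ℕ) : ℝ)
      = ((m:ℝ)+1) * ∑ i ∈ range (m+1), (-1:ℝ)^i * ((m.choose i : ℕ) : ℝ) / ((j:ℝ)+i+1) := by
  have hIcc : ∑ i ∈ Icc 1 (m+1), (-1:ℝ)^i / ((j:ℝ)+i) * (((m+1).choose i : ℕ) : ℝ)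
      = ∑ i ∈ range (m+1), (-1:ℝ)^(1+i) / ((j:ℝ)+(1+i)) * (((m+1).choose (1+i) : ℕ) : ℝ) := by
    rw [← Finset.Ico_add_one_right_eq_Icc, Finset.sum_Ico_eq_sum_range]
    norm_num
  rw [hIcc, Finset.mul_sum, Finset.mul_sum]
  have key : ∀ i ∈ range (m+1),
      (j:ℝ) * ((-1:ℝ)^(1+i) / ((j:ℝ)+(1+i)) * (((m+1).choose (1+i) : ℕ) : ℝ))
      = (-1:ℝ)^(1+i) * (((m+1).choose (1+i) : ℕ) : ℝ)
        + ((m:ℝ)+1) * ((-1:ℝ)^i * ((m.choose i : ℕ) : ℝ) / ((j:ℝ)+i+1)) := by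
    intro i _
    have hne : ((j:ℝ)+(1+i)) ≠ 0 := by positivity
    have hch : ((i:ℝ)+1) * (((m+1).choose (i+1) : ℕ) : ℝ) = ((m:ℝ)+1) * ((m.choose i : ℕ) : ℝ) := by
      have := Nat.add_one_mul_choose_eq m i
      have := congrArg (Nat.cast : ℕ → ℝ) this
      push_cast at this
      linarith [this]
    have h1i : (1:ℕ) + i = i + 1 := by omega
    rw [h1i]
    have hne' : ((j:ℝ)+i+1) ≠ 0 := by positivity
    have hrw : ((m:ℝ)+1) * ((-1:ℝ)^i * ((m.choose i : ℕ) : ℝ) / ((j:ℝ)+i+1))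
        = (-1:ℝ)^i * (((i:ℝ)+1) * (((m+1).choose (i+1) : ℕ) : ℝ)) / ((j:ℝ)+i+1) := by
      rw [hch]; ring
    rw [hrw]
    field_simp
    ring
  rw [Finset.sum_congr rfl key, Finset.sum_add_distrib]
  have halt : ∑ i ∈ range (m+2), (-1:ℝ)^i * (((m+1).choose i : ℕ) : ℝ) = 0 := by
    exact_mod_cast Int.alternating_sum_range_choose_of_ne (Nat.succ_ne_zero m)
  rw [Finset.sum_range_succ'] at halt
  simp only [Nat.choose_zero_right, pow_zero, Nat.cast_one, one_mul] at halt
  have : ∑ i ∈ range (m+1), (-1:ℝ)^(1+i) * (((m+1).choose (1+i) : ℕ) : ℝ) = -1 := by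
    have e : ∀ i ∈ range (m+1), (-1:ℝ)^(1+i) * (((m+1).choose (1+i) : ℕ) : ℝ)
        = (-1:ℝ)^(i+1) * (((m+1).choose (i+1) : ℕ) : ℝ) := by
      intro i _; rw [Nat.add_comm 1 i]
    rw [Finset.sum_congr rfl e]
    linarith [halt]
  rw [this]
  ring

lemma my_integral_log_pow_mul (m j : ℕ) {x : ℝ} (hx : 1 ≤ x) :
    ∫ u in (1:ℝ)..x, Real.log u ^ j * (((m:ℝ)+1) * (Real.log x - Real.log u) ^ m / u)
      = Real.log x ^ (j+m+1) * (((m:ℝ)+1) *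
          ∑ i ∈ range (m+1), (-1:ℝ)^i * ((m.choose i : ℕ):ℝ) / ((j:ℝ)+(i:ℝ)+1)) := by
  set L := Real.log x with hL
  have hfun : ∀ u : ℝ, Real.log u ^ j * (((m:ℝ)+1) * (L - Real.log u) ^ m / u)
      = ∑ p ∈ range (m+1), (((m:ℝ)+1) * L^p * (-1:ℝ)^(m-p) * ((m.choose p : ℕ):ℝ))
          * (Real.log u ^ (j+(m-p)) / u) := by
    intro u
    rw [sub_eq_add_neg, add_pow, Finset.mul_sum, Finset.sum_div, Finset.mul_sum]
    refine Finset.sum_congr rfl fun p hp => ?_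
    rw [neg_pow, pow_add]
    ring
  simp only [hfun]
  rw [intervalIntegral.integral_finset_sum (fun p hp =>
    ((contOn_log_pow_div (j+(m-p)) hx).intervalIntegrable).const_mul _)]
  have hterm : ∀ p ∈ range (m+1),
      (∫ u in (1:ℝ)..x, (((m:ℝ)+1) * L^p * (-1:ℝ)^(m-p) * ((m.choose p : ℕ):ℝ))
          * (Real.log u ^ (j+(m-p)) / u))
      = (((m:ℝ)+1) * L^p * (-1:ℝ)^(m-p) * ((m.choose p : ℕ):ℝ))
          * (L ^ (j+(m-p)+1) / (((j+(m-p) : ℕ) : ℝ) + 1)) := by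
    intro p hp
    rw [intervalIntegral.integral_const_mul, my_integral_log_pow (j+(m-p)) hx]
  rw [Finset.sum_congr rfl hterm, Finset.mul_sum]
  have hrefl := Finset.sum_range_reflect (fun p => (((m:ℝ)+1) * L^p * (-1:ℝ)^(m-p)
      * ((m.choose p : ℕ):ℝ)) * (L ^ (j+(m-p)+1) / (((j+(m-p) : ℕ) : ℝ) + 1))) (m+1)
  rw [← hrefl, Finset.mul_sum]
  apply Finset.sum_congr rfl
  intro p hp
  rw [Finset.mem_range] at hp
  have hp' : p ≤ m := by omega
  have h1 : m + 1 - 1 - p = m - p := by omega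
  have h2 : m - (m - p) = p := by omega
  have h4 : m.choose (m - p) = m.choose p := Nat.choose_symm hp'
  rw [h1, h2, h4]
  have h6 : L ^ (m - p) * L ^ (j + p + 1) = L ^ (j + m + 1) := by
    rw [← pow_add]; congr 1; omega
  push_cast
  rw [← h6]
  ring

lemma my_heq (f : ℕ → ℝ) (g : ℝ → ℝ) {x : ℝ} (hx : 1 ≤ x) :
    Set.EqOn (fun u => (∑ n ∈ Icc 1 ⌊u⌋₊, f n) * g u)
      (fun u => ∑ n ∈ Icc 1 ⌊x⌋₊, f n * Set.indicator (Set.Ici (n:ℝ)) g u)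
      (Set.Icc 1 x) := by
  intro u hu
  simp only []
  classical
  have hu0 : (0:ℝ) ≤ u := le_trans zero_le_one hu.1
  have hsum : ∑ n ∈ Icc 1 ⌊x⌋₊, f n * Set.indicator (Set.Ici (n:ℝ)) g u
      = ∑ n ∈ (Icc 1 ⌊x⌋₊).filter (fun n : ℕ => (n:ℝ) ≤ u), f n * g u := by
    rw [Finset.sum_filter]
    refine Finset.sum_congr rfl fun n _ => ?_
    by_cases h : (n:ℝ) ≤ u
    · rw [if_pos h, Set.indicator_of_mem (Set.mem_Ici.mpr h)]
    · rw [if_neg h, Set.indicator_of_notMem (by simpa using h), mul_zero]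
  have hfilter : (Icc 1 ⌊x⌋₊).filter (fun n : ℕ => (n:ℝ) ≤ u) = Icc 1 ⌊u⌋₊ := by
    ext a
    simp only [Finset.mem_filter, Finset.mem_Icc]
    constructor
    · rintro ⟨⟨h1, _⟩, h2⟩
      exact ⟨h1, (Nat.le_floor_iff hu0).mpr h2⟩
    · rintro ⟨h1, h2⟩
      have hau : (a:ℝ) ≤ u := (Nat.le_floor_iff hu0).mp h2
      refine ⟨⟨h1, Nat.le_floor ?_⟩, hau⟩
      exact le_trans hau hu.2
  rw [hsum, hfilter, ← Finset.sum_mul]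

lemma my_ind_integrable (g : ℝ → ℝ) {x : ℝ} (hx : 1 ≤ x)
    (hg : ContinuousOn g (Set.Icc 1 x)) (n : ℕ) :
    IntervalIntegrable (Set.indicator (Set.Ici (n:ℝ)) g) volume 1 x := by
  rw [intervalIntegrable_iff]
  refine IntegrableOn.indicator ?_ measurableSet_Ici
  refine (hg.integrableOn_Icc).mono_set ?_
  rw [Set.uIoc_of_le hx]
  exact Set.Ioc_subset_Icc_self

lemma my_step_mul_integrable (f : ℕ → ℝ) (g : ℝ → ℝ) {x : ℝ} (hx : 1 ≤ x)
    (hg : ContinuousOn g (Set.Icc 1 x)) :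
    IntervalIntegrable (fun u => (∑ n ∈ Icc 1 ⌊u⌋₊, f n) * g u) volume 1 x := by
  have hsum : IntervalIntegrable
      (fun u => ∑ n ∈ Icc 1 ⌊x⌋₊, f n * Set.indicator (Set.Ici (n:ℝ)) g u) volume 1 x :=
    by
      have h := IntervalIntegrable.sum (μ := volume) (a := (1:ℝ)) (b := x) (Icc 1 ⌊x⌋₊)
        (f := fun n u => f n * Set.indicator (Set.Ici (n:ℝ)) g u)
        (fun n _ => (my_ind_integrable g hx hg n).const_mul (f n))
      have he : (∑ n ∈ Icc 1 ⌊x⌋₊, fun u => f n * Set.indicator (Set.Ici (n:ℝ)) g u)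
          = fun u => ∑ n ∈ Icc 1 ⌊x⌋₊, f n * Set.indicator (Set.Ici (n:ℝ)) g u := by
        funext u
        exact Finset.sum_apply u _ _
      rwa [he] at h
  rw [intervalIntegrable_iff] at hsum ⊢
  refine hsum.congr_fun ?_ measurableSet_uIoc
  refine Set.EqOn.symm ?_
  refine (my_heq f g hx).mono ?_
  rw [Set.uIoc_of_le hx]
  exact Set.Ioc_subset_Icc_self

lemma my_ind_integral (m : ℕ) {x : ℝ} (hx : 1 ≤ x) {n : ℕ} (hn1 : 1 ≤ n) (hnx : (n:ℝ) ≤ x) :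
    ∫ u in (1:ℝ)..x, Set.indicator (Set.Ici (n:ℝ))
        (fun u => ((m:ℝ)+1) * (Real.log x - Real.log u) ^ m / u) u
      = (Real.log x - Real.log n) ^ (m+1) := by
  set g : ℝ → ℝ := fun u => ((m:ℝ)+1) * (Real.log x - Real.log u) ^ m / u with hgdef
  have hn1' : (1:ℝ) ≤ (n:ℝ) := by exact_mod_cast hn1
  have hn0 : (0:ℝ) < (n:ℝ) := lt_of_lt_of_le one_pos hn1'
  have hgc : ContinuousOn g (Set.Icc 1 x) := by
    have := contOn_sub_log m (Real.log x) one_pos hx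
    rwa [Set.uIcc_of_le hx] at this
  have hint : IntervalIntegrable (Set.indicator (Set.Ici (n:ℝ)) g) volume 1 x :=
    my_ind_integrable g hx hgc n
  have h1 : IntervalIntegrable (Set.indicator (Set.Ici (n:ℝ)) g) volume 1 n :=
    hint.mono_set (by
      rw [Set.uIcc_of_le hx, Set.uIcc_of_le hn1']; exact Set.Icc_subset_Icc_right hnx)
  have h2 : IntervalIntegrable (Set.indicator (Set.Ici (n:ℝ)) g) volume n x :=
    hint.mono_set (by
      rw [Set.uIcc_of_le hx, Set.uIcc_of_le hnx]; exact Set.Icc_subset_Icc_left hn1')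
  rw [← intervalIntegral.integral_add_adjacent_intervals h1 h2]
  have hz : ∫ u in (1:ℝ)..(n:ℝ), Set.indicator (Set.Ici (n:ℝ)) g u = 0 := by
    rw [← intervalIntegral.integral_zero (a := (1:ℝ)) (b := (n:ℝ)) (μ := volume)]
    apply intervalIntegral.integral_congr_ae
    have hne : ∀ᵐ u : ℝ, u ≠ (n:ℝ) := by
      have h0 : (volume : Measure ℝ) {(n:ℝ)} = 0 := measure_singleton _
      simpa [ae_iff] using h0
    filter_upwards [hne] with u hu hmem
    rw [Set.uIoc_of_le hn1'] at hmem
    have hlt : u < (n:ℝ) := lt_of_le_of_ne hmem.2 hu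
    exact Set.indicator_of_notMem (by simpa using not_le.mpr hlt) g
  have hg' : ∫ u in (n:ℝ)..x, Set.indicator (Set.Ici (n:ℝ)) g u = ∫ u in (n:ℝ)..x, g u := by
    apply intervalIntegral.integral_congr
    intro u hu
    rw [Set.uIcc_of_le hnx] at hu
    exact Set.indicator_of_mem (Set.mem_Ici.mpr hu.1) g
  rw [hz, hg', zero_add, my_integral_sub_log_pow m (Real.log x) hn0 hnx, sub_self,
    zero_pow (Nat.succ_ne_zero m), sub_zero]

lemma my_sum_eq_integral (f : ℕ → ℝ) (m : ℕ) {x : ℝ} (hx : 1 ≤ x) :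
    ∑ n ∈ Icc 1 ⌊x⌋₊, f n * (Real.log x - Real.log n) ^ (m+1)
      = ∫ u in (1:ℝ)..x, (∑ n ∈ Icc 1 ⌊u⌋₊, f n)
          * (((m:ℝ)+1) * (Real.log x - Real.log u) ^ m / u) := by
  set g : ℝ → ℝ := fun u => ((m:ℝ)+1) * (Real.log x - Real.log u) ^ m / u with hgdef
  have hgc : ContinuousOn g (Set.Icc 1 x) := by
    have := contOn_sub_log m (Real.log x) one_pos hx
    rwa [Set.uIcc_of_le hx] at this
  have heq := my_heq f g hx
  rw [intervalIntegral.integral_congr (g := fun u => ∑ n ∈ Icc 1 ⌊x⌋₊,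
      f n * Set.indicator (Set.Ici (n:ℝ)) g u) (by rwa [Set.uIcc_of_le hx])]
  rw [intervalIntegral.integral_finset_sum (fun n _ =>
    (my_ind_integrable g hx hgc n).const_mul (f n))]
  refine Finset.sum_congr rfl fun n hn => ?_
  rw [Finset.mem_Icc] at hn
  have hn1 : 1 ≤ n := hn.1
  have hnx : (n:ℝ) ≤ x :=
    le_trans (Nat.cast_le.mpr hn.2) (Nat.floor_le (le_trans zero_le_one hx))
  rw [intervalIntegral.integral_const_mul]
  congr 1
  exact (my_ind_integral m hx hn1 hnx).symm

/-- Second part of Lemma 1: if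
`∑_{n ≤ x} f n = ∑_{j=t}^r c_j (log x)^j + O((log x)^{t-1})` with `r ≥ t ≥ 1`, then for
every `k ≥ 1` there exist constants `C_{k+t}, …, C_{k+r}`, given by the explicit
formula, with `∑_{n ≤ x} f n (log (x/n))^k = ∑_{j=k+t}^{k+r} C_j (log x)^j
  + O((log x)^{t+k-1})`. -/
theorem sum_mul_log_pow_asymptotic_log_error (r t : ℕ) (ht : 1 ≤ t) (htr : t ≤ r)
    (f : ℕ → ℝ) (c : ℕ → ℝ)
    (hf : (fun x : ℝ => (∑ n ∈ Finset.Icc 1 ⌊x⌋₊, f n) -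
          ∑ j ∈ Finset.Icc t r, c j * Real.log x ^ j)
        =O[atTop] fun x : ℝ => Real.log x ^ (t - 1)) :
    ∀ k : ℕ, 0 < k → ∃ C : ℕ → ℝ,
      (∀ j ∈ Finset.Icc (k + t) (k + r),
        C j = c (j - k) * (1 + ((j - k : ℕ) : ℝ) *
          ∑ i ∈ Finset.Icc 1 k, (-1 : ℝ) ^ i / ((j - k + i : ℕ) : ℝ) * (k.choose i : ℝ))) ∧
      (fun x : ℝ => (∑ n ∈ Finset.Icc 1 ⌊x⌋₊, f n * Real.log (x / (n : ℝ)) ^ k) -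
          ∑ j ∈ Finset.Icc (k + t) (k + r), C j * Real.log x ^ j)
        =O[atTop] fun x : ℝ => Real.log x ^ (t + k - 1) := by
  intro k hk
  obtain ⟨m, rfl⟩ : ∃ m, k = m + 1 := ⟨k - 1, by omega⟩
  refine ⟨fun j => c (j - (m+1)) * (1 + ((j - (m+1) : ℕ) : ℝ) *
      ∑ i ∈ Finset.Icc 1 (m+1), (-1:ℝ)^i / ((j - (m+1) + i : ℕ) : ℝ) * ((m+1).choose i : ℝ)),
    fun j _ => rfl, ?_⟩
  obtain ⟨c₀, hc₀⟩ := hf.bound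
  rw [Filter.eventually_atTop] at hc₀
  obtain ⟨u1, hu1⟩ := hc₀
  set u0 : ℝ := max u1 1 with hu0def
  have hu0_1 : (1:ℝ) ≤ u0 := le_max_right _ _
  set A : ℝ := max c₀ 0 with hAdef
  have hA0 : 0 ≤ A := le_max_right _ _
  set M : ℝ := max (Real.log u0) 1 with hMdef
  have hM0 : (0:ℝ) ≤ M := le_trans zero_le_one (le_max_right _ _)
  set B : ℝ := (∑ n ∈ Finset.Icc 1 ⌊u0⌋₊, |f n|) + ∑ j ∈ Finset.Icc t r, |c j| * M ^ j
    with hBdef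
  have hB0 : 0 ≤ B := add_nonneg (Finset.sum_nonneg fun n _ => abs_nonneg _)
    (Finset.sum_nonneg fun j _ => mul_nonneg (abs_nonneg _) (pow_nonneg hM0 _))
  set D : ℝ := ((m:ℝ)+1) * ∑ i ∈ range (m+1),
      (-1:ℝ)^i * ((m.choose i : ℕ):ℝ) / (((t-1:ℕ):ℝ)+(i:ℝ)+1) with hDdef
  -- pointwise bound on the error term
  have hEbd : ∀ u : ℝ, 1 ≤ u →
      |(∑ n ∈ Finset.Icc 1 ⌊u⌋₊, f n) - ∑ j ∈ Finset.Icc t r, c j * Real.log u ^ j|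
        ≤ B + A * Real.log u ^ (t-1) := by
    intro u hu1'
    have hlogu0 : 0 ≤ Real.log u := Real.log_nonneg hu1'
    have hApos : 0 ≤ A * Real.log u ^ (t-1) := mul_nonneg hA0 (pow_nonneg hlogu0 _)
    rcases le_total u u0 with h | h
    · have h1 : |∑ n ∈ Finset.Icc 1 ⌊u⌋₊, f n| ≤ ∑ n ∈ Finset.Icc 1 ⌊u0⌋₊, |f n| :=
        (Finset.abs_sum_le_sum_abs _ _).trans
          (Finset.sum_le_sum_of_subset_of_nonneg
            (Finset.Icc_subset_Icc_right (Nat.floor_mono h)) (fun _ _ _ => abs_nonneg _))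
      have h2 : |∑ j ∈ Finset.Icc t r, c j * Real.log u ^ j|
          ≤ ∑ j ∈ Finset.Icc t r, |c j| * M ^ j := by
        refine (Finset.abs_sum_le_sum_abs _ _).trans (Finset.sum_le_sum fun j _ => ?_)
        rw [abs_mul, abs_pow, abs_of_nonneg hlogu0]
        refine mul_le_mul_of_nonneg_left ?_ (abs_nonneg _)
        refine pow_le_pow_left₀ hlogu0 ?_ j
        exact le_trans (Real.log_le_log (lt_of_lt_of_le one_pos hu1') h) (le_max_left _ _)
      have habs : |(∑ n ∈ Finset.Icc 1 ⌊u⌋₊, f n) - ∑ j ∈ Finset.Icc t r, c j * Real.log u ^ j|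
          ≤ |∑ n ∈ Finset.Icc 1 ⌊u⌋₊, f n| + |∑ j ∈ Finset.Icc t r, c j * Real.log u ^ j| := by
        rw [sub_eq_add_neg]
        exact (abs_add_le _ _).trans (by rw [abs_neg])
      have : |(∑ n ∈ Finset.Icc 1 ⌊u⌋₊, f n) - ∑ j ∈ Finset.Icc t r, c j * Real.log u ^ j| ≤ B :=
        habs.trans (add_le_add h1 h2)
      linarith
    · have hu1u : u1 ≤ u := le_trans (le_max_left u1 1) h
      have := hu1 u hu1u
      rw [Real.norm_eq_abs, Real.norm_eq_abs] at this
      have habs : |Real.log u ^ (t-1)| = Real.log u ^ (t-1) := by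
        rw [abs_pow, abs_of_nonneg hlogu0]
      rw [habs] at this
      have hcA : c₀ * Real.log u ^ (t-1) ≤ A * Real.log u ^ (t-1) :=
        mul_le_mul_of_nonneg_right (le_max_left _ _) (pow_nonneg hlogu0 _)
      linarith
  rw [Asymptotics.isBigO_iff]
  refine ⟨B + A * |D|, ?_⟩
  have hexp : t + (m+1) - 1 = t + m := by omega
  simp only [hexp]
  filter_upwards [eventually_ge_atTop (max u0 (Real.exp 1))] with x hx
  have hxu0 : u0 ≤ x := le_trans (le_max_left _ _) hx
  have hx1 : (1:ℝ) ≤ x := le_trans hu0_1 hxu0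
  have hL1 : 1 ≤ Real.log x := by
    have h1 : Real.exp 1 ≤ x := le_trans (le_max_right _ _) hx
    have := Real.log_le_log (Real.exp_pos 1) h1
    rwa [Real.log_exp] at this
  have hL0 : 0 ≤ Real.log x := by linarith
  have hgc : ContinuousOn (fun u => ((m:ℝ)+1) * (Real.log x - Real.log u) ^ m / u)
      (Set.Icc 1 x) := by
    have := contOn_sub_log m (Real.log x) one_pos hx1
    rwa [Set.uIcc_of_le hx1] at this
  have hSg_int : IntervalIntegrable (fun u => (∑ n ∈ Finset.Icc 1 ⌊u⌋₊, f n)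
      * (((m:ℝ)+1) * (Real.log x - Real.log u) ^ m / u)) volume 1 x :=
    my_step_mul_integrable f _ hx1 hgc
  have hPg_int : IntervalIntegrable (fun u => (∑ j ∈ Finset.Icc t r, c j * Real.log u ^ j)
      * (((m:ℝ)+1) * (Real.log x - Real.log u) ^ m / u)) volume 1 x := by
    apply ContinuousOn.intervalIntegrable
    rw [Set.uIcc_of_le hx1]
    refine ContinuousOn.mul ?_ hgc
    refine continuousOn_finset_sum _ fun j _ => ?_
    refine ContinuousOn.mul continuousOn_const ?_
    exact (Real.continuousOn_log.mono (fun u hu =>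
      Set.mem_compl_singleton_iff.mpr (lt_of_lt_of_le one_pos hu.1).ne')).pow j
  have hgint : IntervalIntegrable (fun u => ((m:ℝ)+1) * (Real.log x - Real.log u) ^ m / u)
      volume 1 x := (contOn_sub_log m (Real.log x) one_pos hx1).intervalIntegrable
  have hlogg_int : IntervalIntegrable (fun u => Real.log u ^ (t-1)
      * (((m:ℝ)+1) * (Real.log x - Real.log u) ^ m / u)) volume 1 x :=
    (contOn_pow_mul (t-1) m hx1).intervalIntegrable
  -- main term evaluation
  have hmain : (∫ u in (1:ℝ)..x, (∑ j ∈ Finset.Icc t r, c j * Real.log u ^ j)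
        * (((m:ℝ)+1) * (Real.log x - Real.log u) ^ m / u))
      = ∑ j ∈ Finset.Icc (m+1+t) (m+1+r), (c (j - (m+1)) * (1 + ((j - (m+1) : ℕ) : ℝ) *
          ∑ i ∈ Finset.Icc 1 (m+1), (-1:ℝ)^i / ((j - (m+1) + i : ℕ) : ℝ)
            * ((m+1).choose i : ℝ))) * Real.log x ^ j := by
    have hrw : ∀ u : ℝ, (∑ j ∈ Finset.Icc t r, c j * Real.log u ^ j)
        * (((m:ℝ)+1) * (Real.log x - Real.log u) ^ m / u)
        = ∑ j ∈ Finset.Icc t r, c j * (Real.log u ^ j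
            * (((m:ℝ)+1) * (Real.log x - Real.log u) ^ m / u)) := by
      intro u
      rw [Finset.sum_mul]
      exact Finset.sum_congr rfl fun j _ => mul_assoc _ _ _
    simp only [hrw]
    rw [intervalIntegral.integral_finset_sum (fun j _ =>
      ((contOn_pow_mul j m hx1).intervalIntegrable).const_mul _)]
    rw [show Finset.Icc (m+1+t) (m+1+r) = (Finset.Icc t r).map (addLeftEmbedding (m+1)) from
      (Finset.map_add_left_Icc _ _ _).symm, Finset.sum_map]
    refine Finset.sum_congr rfl fun j hj => ?_
    rw [Finset.mem_Icc] at hj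
    have hj1 : 1 ≤ j := le_trans ht hj.1
    rw [intervalIntegral.integral_const_mul, my_integral_log_pow_mul m j hx1, ← my_comb m j hj1]
    simp only [addLeftEmbedding_apply, Nat.add_sub_cancel_left]
    push_cast
    ring
  -- the key identity
  have hT : (∑ n ∈ Finset.Icc 1 ⌊x⌋₊, f n * Real.log (x / (n:ℝ)) ^ (m+1))
      = ∑ n ∈ Finset.Icc 1 ⌊x⌋₊, f n * (Real.log x - Real.log n) ^ (m+1) := by
    refine Finset.sum_congr rfl fun n hn => ?_
    rw [Finset.mem_Icc] at hn
    have hn0 : ((n:ℝ)) ≠ 0 := by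
      have : (0:ℕ) < n := by omega
      exact_mod_cast this.ne'
    rw [Real.log_div (lt_of_lt_of_le one_pos hx1).ne' hn0]
  have key : (∑ n ∈ Finset.Icc 1 ⌊x⌋₊, f n * Real.log (x / (n:ℝ)) ^ (m+1))
      - (∑ j ∈ Finset.Icc (m+1+t) (m+1+r), (c (j - (m+1)) * (1 + ((j - (m+1) : ℕ) : ℝ) *
          ∑ i ∈ Finset.Icc 1 (m+1), (-1:ℝ)^i / ((j - (m+1) + i : ℕ) : ℝ)
            * ((m+1).choose i : ℝ))) * Real.log x ^ j)
      = ∫ u in (1:ℝ)..x, ((∑ n ∈ Finset.Icc 1 ⌊u⌋₊, f n)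
            * (((m:ℝ)+1) * (Real.log x - Real.log u) ^ m / u)
          - (∑ j ∈ Finset.Icc t r, c j * Real.log u ^ j)
            * (((m:ℝ)+1) * (Real.log x - Real.log u) ^ m / u)) := by
    rw [hT, my_sum_eq_integral f m hx1, ← hmain,
      ← intervalIntegral.integral_sub hSg_int hPg_int]
  -- integral of the bound
  have hIg : (∫ u in (1:ℝ)..x, ((m:ℝ)+1) * (Real.log x - Real.log u) ^ m / u)
      = Real.log x ^ (m+1) := by
    rw [my_integral_sub_log_pow m (Real.log x) one_pos hx1, Real.log_one, sub_zero, sub_self,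
      zero_pow (Nat.succ_ne_zero m), sub_zero]
  have hIlg : (∫ u in (1:ℝ)..x, Real.log u ^ (t-1)
        * (((m:ℝ)+1) * (Real.log x - Real.log u) ^ m / u))
      = Real.log x ^ (t+m) * D := by
    rw [my_integral_log_pow_mul m (t-1) hx1, show t-1+m+1 = t+m from by omega, hDdef]
  have hptwise : ∀ u ∈ Set.Icc (1:ℝ) x,
      ‖(∑ n ∈ Finset.Icc 1 ⌊u⌋₊, f n) * (((m:ℝ)+1) * (Real.log x - Real.log u) ^ m / u)
        - (∑ j ∈ Finset.Icc t r, c j * Real.log u ^ j)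
          * (((m:ℝ)+1) * (Real.log x - Real.log u) ^ m / u)‖
      ≤ B * (((m:ℝ)+1) * (Real.log x - Real.log u) ^ m / u)
        + A * (Real.log u ^ (t-1) * (((m:ℝ)+1) * (Real.log x - Real.log u) ^ m / u)) := by
    intro u hu
    have hu0 : (0:ℝ) < u := lt_of_lt_of_le one_pos hu.1
    have hlu : Real.log u ≤ Real.log x := Real.log_le_log hu0 hu.2
    have hg0 : 0 ≤ ((m:ℝ)+1) * (Real.log x - Real.log u) ^ m / u := by
      apply div_nonneg _ hu0.le
      exact mul_nonneg (by positivity) (pow_nonneg (by linarith) m)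
    rw [← sub_mul, Real.norm_eq_abs, abs_mul, abs_of_nonneg hg0]
    calc |(∑ n ∈ Finset.Icc 1 ⌊u⌋₊, f n) - ∑ j ∈ Finset.Icc t r, c j * Real.log u ^ j|
          * (((m:ℝ)+1) * (Real.log x - Real.log u) ^ m / u)
        ≤ (B + A * Real.log u ^ (t-1))
          * (((m:ℝ)+1) * (Real.log x - Real.log u) ^ m / u) :=
          mul_le_mul_of_nonneg_right (hEbd u hu.1) hg0
      _ = B * (((m:ℝ)+1) * (Real.log x - Real.log u) ^ m / u)
          + A * (Real.log u ^ (t-1) * (((m:ℝ)+1) * (Real.log x - Real.log u) ^ m / u)) := by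
          ring
  have hbnd_int : IntervalIntegrable (fun u =>
      B * (((m:ℝ)+1) * (Real.log x - Real.log u) ^ m / u)
        + A * (Real.log u ^ (t-1) * (((m:ℝ)+1) * (Real.log x - Real.log u) ^ m / u)))
      volume 1 x := (hgint.const_mul B).add (hlogg_int.const_mul A)
  calc ‖(∑ n ∈ Finset.Icc 1 ⌊x⌋₊, f n * Real.log (x / (n:ℝ)) ^ (m+1))
      - ∑ j ∈ Finset.Icc (m+1+t) (m+1+r), (c (j - (m+1)) * (1 + ((j - (m+1) : ℕ) : ℝ) *
          ∑ i ∈ Finset.Icc 1 (m+1), (-1:ℝ)^i / ((j - (m+1) + i : ℕ) : ℝ)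
            * ((m+1).choose i : ℝ))) * Real.log x ^ j‖
      = ‖∫ u in (1:ℝ)..x, ((∑ n ∈ Finset.Icc 1 ⌊u⌋₊, f n)
            * (((m:ℝ)+1) * (Real.log x - Real.log u) ^ m / u)
          - (∑ j ∈ Finset.Icc t r, c j * Real.log u ^ j)
            * (((m:ℝ)+1) * (Real.log x - Real.log u) ^ m / u))‖ := by rw [key]
    _ ≤ ∫ u in (1:ℝ)..x, ‖(∑ n ∈ Finset.Icc 1 ⌊u⌋₊, f n)
            * (((m:ℝ)+1) * (Real.log x - Real.log u) ^ m / u)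
          - (∑ j ∈ Finset.Icc t r, c j * Real.log u ^ j)
            * (((m:ℝ)+1) * (Real.log x - Real.log u) ^ m / u)‖ :=
        intervalIntegral.norm_integral_le_integral_norm hx1
    _ ≤ ∫ u in (1:ℝ)..x, (B * (((m:ℝ)+1) * (Real.log x - Real.log u) ^ m / u)
          + A * (Real.log u ^ (t-1) * (((m:ℝ)+1) * (Real.log x - Real.log u) ^ m / u))) :=
        intervalIntegral.integral_mono_on hx1 (hSg_int.sub hPg_int).norm hbnd_int hptwise
    _ = B * Real.log x ^ (m+1) + A * (Real.log x ^ (t+m) * D) := by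
        rw [intervalIntegral.integral_add (hgint.const_mul B) (hlogg_int.const_mul A),
          intervalIntegral.integral_const_mul, intervalIntegral.integral_const_mul, hIg, hIlg]
    _ ≤ (B + A * |D|) * Real.log x ^ (t+m) := by
        have hp1 : Real.log x ^ (m+1) ≤ Real.log x ^ (t+m) :=
          pow_le_pow_right₀ hL1 (by omega)
        have hp0 : (0:ℝ) ≤ Real.log x ^ (t+m) := pow_nonneg hL0 _
        have hDD : Real.log x ^ (t+m) * D ≤ Real.log x ^ (t+m) * |D| :=
          mul_le_mul_of_nonneg_left (le_abs_self D) hp0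
        nlinarith [mul_le_mul_of_nonneg_left hp1 hB0, mul_le_mul_of_nonneg_left hDD hA0]
    _ = (B + A * |D|) * ‖Real.log x ^ (t+m)‖ := by
        rw [Real.norm_eq_abs, abs_of_nonneg (pow_nonneg hL0 _)]
end

section
/- Let $r \ge 0$ and $i \ge 1$ be integers, and let $f$ be an arithmetic function such that $A(x) := \sum_{n \le x} f(n) = \sum_{j=0}^{r} c_j (\log x)^j + R(x)$, where for every $\varepsilon > 0$ one has $|R(x)| = O(x^{-1/2+\varepsilon})$. Then the integral $D_i := -i \int_1^{\infty} \frac{(\log t)^{i-1} R(t)}{t}\, dt$ converges, and for every $\varepsilon > 0$, $\sum_{n \le x} f(n)(\log n)^i = \sum_{j=0}^{r} \frac{c_j\, j}{j+i} (\log x)^{j+i} + D_i + O(x^{-1/2+\varepsilon})$. -/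
open Filter Finset

section SumMulLogAux

open MeasureTheory

private lemma logpow_bound' (k : ℕ) {δ : ℝ} (hδ : 0 < δ) :
    ∃ K > (0:ℝ), ∀ t : ℝ, 1 ≤ t → Real.log t ^ k ≤ K * t ^ δ := by
  rcases Nat.eq_zero_or_pos k with hk | hk
  · exact ⟨1, one_pos, fun t ht => by
      rw [hk]
      simpa using Real.one_le_rpow ht hδ.le⟩
  · refine ⟨(k / δ) ^ k, by positivity, fun t ht => ?_⟩
    have h0 : (0:ℝ) < δ / k := by positivity
    have hlog : Real.log t ≤ t ^ (δ / k) / (δ / k) :=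
      Real.log_le_rpow_div (by linarith) h0
    have h1 : Real.log t ^ k ≤ (t ^ (δ / k) / (δ / k)) ^ k :=
      pow_le_pow_left₀ (Real.log_nonneg ht) hlog k
    refine h1.trans_eq ?_
    rw [div_pow, ← Real.rpow_natCast (t ^ (δ/k)) k, ← Real.rpow_mul (by linarith)]
    rw [div_mul_cancel₀ _ (by exact_mod_cast hk.ne' : (k:ℝ) ≠ 0)]
    rw [div_eq_mul_inv, mul_comm]
    congr 1
    rw [← inv_pow, inv_div]

private lemma Rglobal' (r : ℕ) (f : ℕ → ℝ) (c : ℕ → ℝ) (R : ℝ → ℝ)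
    (hA : ∀ x : ℝ, 1 ≤ x → (∑ n ∈ Finset.Icc 1 ⌊x⌋₊, f n) =
      (∑ j ∈ Finset.range (r + 1), c j * Real.log x ^ j) + R x)
    (hR : ∀ ε > (0 : ℝ), R =O[atTop] fun x : ℝ => x ^ (-1 / 2 + ε))
    {δ : ℝ} (hδ : 0 < δ) (hδ' : δ ≤ 1/2) :
    ∃ C > (0:ℝ), ∀ t : ℝ, 1 ≤ t → |R t| ≤ C * t ^ (-1/2 + δ) := by
  obtain ⟨C₀, hC₀⟩ := (hR δ hδ).bound
  obtain ⟨X₀, hX₀⟩ := hC₀.exists_forall_of_atTop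
  set M : ℝ := max X₀ 1 with hM
  have hM1 : (1:ℝ) ≤ M := le_max_right _ _
  have hM0 : (0:ℝ) < M := lt_of_lt_of_le one_pos hM1
  set B : ℝ := (∑ n ∈ Finset.Icc 1 ⌊M⌋₊, |f n|) +
      ∑ j ∈ Finset.range (r + 1), |c j| * max 1 (Real.log M) ^ j with hB
  have hBnn : 0 ≤ B := by
    apply add_nonneg
    · exact Finset.sum_nonneg fun n _ => abs_nonneg _
    · exact Finset.sum_nonneg fun j _ => by positivity
  have hBle : ∀ t : ℝ, 1 ≤ t → t ≤ M → |R t| ≤ B := by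
    intro t ht htM
    have hRt : R t = (∑ n ∈ Finset.Icc 1 ⌊t⌋₊, f n) -
        ∑ j ∈ Finset.range (r + 1), c j * Real.log t ^ j := by
      rw [hA t ht]; ring
    rw [hRt]
    refine (abs_sub _ _).trans (add_le_add ?_ ?_)
    · refine (Finset.abs_sum_le_sum_abs _ _).trans ?_
      exact Finset.sum_le_sum_of_subset_of_nonneg
        (Finset.Icc_subset_Icc_right (Nat.floor_le_floor htM))
        (fun n _ _ => abs_nonneg _)
    · refine (Finset.abs_sum_le_sum_abs _ _).trans (Finset.sum_le_sum fun j _ => ?_)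
      rw [abs_mul, abs_pow]
      refine mul_le_mul_of_nonneg_left (pow_le_pow_left₀ (abs_nonneg _) ?_ j) (abs_nonneg _)
      rw [abs_of_nonneg (Real.log_nonneg ht)]
      exact (Real.log_le_log (by linarith) htM).trans (le_max_right _ _)
  refine ⟨max C₀ 0 + (B + 1) * M ^ ((1:ℝ)/2), by positivity, fun t ht => ?_⟩
  have htpos : (0:ℝ) < t := lt_of_lt_of_le one_pos ht
  have htp : (0:ℝ) < t ^ (-1/2 + δ) := Real.rpow_pos_of_pos htpos _
  rcases le_total t M with hc | hc
  · have h1 : M ^ (-(1:ℝ)/2) ≤ t ^ (-1/2 + δ) := by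
      calc M ^ (-(1:ℝ)/2) ≤ M ^ (-1/2 + δ) :=
            Real.rpow_le_rpow_of_exponent_le hM1 (by linarith)
        _ ≤ t ^ (-1/2 + δ) := by
            apply Real.rpow_le_rpow_of_nonpos htpos hc (by linarith)
    have key : B ≤ (B + 1) * M ^ ((1:ℝ)/2) * t ^ (-1/2 + δ) := by
      have : (B + 1) * M ^ ((1:ℝ)/2) * M ^ (-(1:ℝ)/2) = B + 1 := by
        rw [mul_assoc, ← Real.rpow_add hM0]; norm_num
      calc B ≤ B + 1 := by linarith
        _ = (B + 1) * M ^ ((1:ℝ)/2) * M ^ (-(1:ℝ)/2) := this.symm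
        _ ≤ (B + 1) * M ^ ((1:ℝ)/2) * t ^ (-1/2 + δ) := by
            apply mul_le_mul_of_nonneg_left h1 (by positivity)
    calc |R t| ≤ B := hBle t ht hc
      _ ≤ (B + 1) * M ^ ((1:ℝ)/2) * t ^ (-1/2 + δ) := key
      _ ≤ (max C₀ 0 + (B + 1) * M ^ ((1:ℝ)/2)) * t ^ (-1/2 + δ) := by
          apply mul_le_mul_of_nonneg_right _ htp.le
          have : (0:ℝ) ≤ max C₀ 0 := le_max_right _ _
          linarith
  · have := hX₀ t (le_trans (le_max_left _ _) hc)
    rw [Real.norm_eq_abs, Real.norm_eq_abs, abs_of_pos htp] at this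
    calc |R t| ≤ C₀ * t ^ (-1/2 + δ) := this
      _ ≤ (max C₀ 0 + (B + 1) * M ^ ((1:ℝ)/2)) * t ^ (-1/2 + δ) := by
          apply mul_le_mul_of_nonneg_right _ htp.le
          have h2 : (0:ℝ) ≤ (B + 1) * M ^ ((1:ℝ)/2) := by positivity
          have : C₀ ≤ max C₀ 0 := le_max_left _ _
          linarith

private lemma Hbound' (i : ℕ) (R : ℝ → ℝ) {C K δ : ℝ} (hK : 0 ≤ K)
    (hRb : ∀ t : ℝ, 1 ≤ t → |R t| ≤ C * t ^ (-1/2 + δ/2))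
    (hL : ∀ t : ℝ, 1 ≤ t → Real.log t ^ (i-1) ≤ K * t ^ (δ/2)) :
    ∀ t : ℝ, 1 ≤ t →
      |Real.log t ^ (i - 1) * R t / t| ≤ K * C * t ^ (-3/2 + δ) := by
  intro t ht
  have htpos : (0:ℝ) < t := lt_of_lt_of_le one_pos ht
  have hln : 0 ≤ Real.log t ^ (i-1) := pow_nonneg (Real.log_nonneg ht) _
  rw [abs_div, abs_mul, abs_of_nonneg hln, abs_of_pos htpos, div_le_iff₀ htpos]
  have h1 : Real.log t ^ (i-1) * |R t| ≤ (K * t ^ (δ/2)) * (C * t ^ (-1/2 + δ/2)) :=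
    mul_le_mul (hL t ht) (hRb t ht) (abs_nonneg _) (by positivity)

  refine h1.trans ?_
  have e1 : K * t ^ (δ/2) * (C * t ^ (-1/2 + δ/2)) = K * C * (t ^ (δ/2) * t ^ (-1/2 + δ/2)) := by
    ring
  rw [e1, ← Real.rpow_add htpos]
  have e2 : K * C * t ^ (-3/2 + δ) * t = K * C * (t ^ (-3/2 + δ) * t ^ (1:ℝ)) := by
    rw [Real.rpow_one]; ring
  rw [e2, ← Real.rpow_add htpos]
  apply le_of_eq
  congr 1
  ring

private lemma Hmeas' (i r : ℕ) (f : ℕ → ℝ) (c : ℕ → ℝ) (R : ℝ → ℝ)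
    (hA : ∀ x : ℝ, 1 ≤ x → (∑ n ∈ Finset.Icc 1 ⌊x⌋₊, f n) =
      (∑ j ∈ Finset.range (r + 1), c j * Real.log x ^ j) + R x) :
    AEStronglyMeasurable (fun t : ℝ => Real.log t ^ (i - 1) * R t / t)
      (volume.restrict (Set.Ici (1:ℝ))) := by
  have hm : Measurable (fun t : ℝ => Real.log t ^ (i - 1) *
      ((∑ n ∈ Finset.Icc 1 ⌊t⌋₊, f n) - ∑ j ∈ Finset.range (r + 1), c j * Real.log t ^ j) / t) := by
    apply Measurable.div _ measurable_id
    apply Measurable.mul (Real.measurable_log.pow_const _)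
    apply Measurable.sub
    · exact Measurable.comp (f := fun t : ℝ => ⌊t⌋₊)
        (g := fun N : ℕ => ∑ n ∈ Finset.Icc 1 N, f n) measurable_from_top Nat.measurable_floor
    · apply Finset.measurable_sum
      intro j _
      exact (Real.measurable_log.pow_const _).const_mul _
  refine hm.aestronglyMeasurable.congr ?_
  rw [Filter.EventuallyEq, ae_restrict_iff' measurableSet_Ici]
  refine ae_of_all _ fun t ht => ?_
  have : R t = (∑ n ∈ Finset.Icc 1 ⌊t⌋₊, f n) -
      ∑ j ∈ Finset.range (r + 1), c j * Real.log t ^ j := by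
    rw [hA t ht]; ring
  rw [this]

private lemma Hint' (i : ℕ) (R : ℝ → ℝ) {C δ : ℝ} (hδ : 0 < δ) (hδ' : δ ≤ 1/4)
    (hb : ∀ t : ℝ, 1 ≤ t → |Real.log t ^ (i - 1) * R t / t| ≤ C * t ^ (-3/2 + δ))
    (hmeas : AEStronglyMeasurable (fun t : ℝ => Real.log t ^ (i - 1) * R t / t)
      (volume.restrict (Set.Ici (1:ℝ)))) :
    IntegrableOn (fun t : ℝ => Real.log t ^ (i - 1) * R t / t) (Set.Ici (1:ℝ)) := by
  have hint : IntegrableOn (fun t : ℝ => C * t ^ (-3/2 + δ)) (Set.Ici (1:ℝ)) := by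
    rw [integrableOn_Ici_iff_integrableOn_Ioi]
    exact (integrableOn_Ioi_rpow_of_lt (by linarith) one_pos).const_mul C
  refine Integrable.mono' hint hmeas ?_
  rw [ae_restrict_iff' measurableSet_Ici]
  exact ae_of_all _ fun t ht => by
    rw [Real.norm_eq_abs]; exact hb t ht

private lemma main_identity' (r i : ℕ) (hi : 1 ≤ i) (f : ℕ → ℝ) (c : ℕ → ℝ) (R : ℝ → ℝ)
    (hA : ∀ x : ℝ, 1 ≤ x → (∑ n ∈ Finset.Icc 1 ⌊x⌋₊, f n) =
      (∑ j ∈ Finset.range (r + 1), c j * Real.log x ^ j) + R x)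
    (hHint : IntegrableOn (fun t : ℝ => Real.log t ^ (i - 1) * R t / t) (Set.Ici (1:ℝ))) :
    ∀ x : ℝ, 1 ≤ x → (∑ n ∈ Finset.Icc 1 ⌊x⌋₊, f n * Real.log (n:ℝ) ^ i) =
      (∑ j ∈ Finset.range (r + 1),
          c j * (j : ℝ) / ((j : ℝ) + (i : ℝ)) * Real.log x ^ (j + i))
        + R x * Real.log x ^ i
        - (i : ℝ) * ∫ t in Set.Ioc (1:ℝ) x, Real.log t ^ (i - 1) * R t / t := by
  intro x hx
  set g : ℝ → ℝ := fun t => Real.log t ^ i with hgdef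
  set c' : ℕ → ℝ := fun k => if k = 0 then 0 else f k with hc'def
  have hipos : (0:ℝ) < (i:ℝ) := by exact_mod_cast hi
  have hg : ∀ t : ℝ, 0 < t → HasDerivAt g ((i:ℝ) * Real.log t ^ (i-1) * t⁻¹) t :=
    fun t ht => (Real.hasDerivAt_log ht.ne').pow i
  have hf_diff : ∀ t ∈ Set.Icc (1:ℝ) x, DifferentiableAt ℝ g t :=
    fun t ht => (hg t (lt_of_lt_of_le one_pos ht.1)).differentiableAt
  have hφcont : ContinuousOn (fun t : ℝ => (i:ℝ) * Real.log t ^ (i-1) * t⁻¹)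
      (Set.Icc (1:ℝ) x) := by
    intro t ht
    have ht0 : t ≠ 0 := ne_of_gt (lt_of_lt_of_le one_pos ht.1)
    exact ((continuousAt_const.mul ((Real.continuousAt_log ht0).pow _)).mul
      (continuousAt_inv₀ ht0)).continuousWithinAt
  have hf_int : IntegrableOn (deriv g) (Set.Icc (1:ℝ) x) := by
    refine (hφcont.integrableOn_Icc).congr_fun (fun t ht => ?_) measurableSet_Icc
    exact ((hg t (lt_of_lt_of_le one_pos ht.1)).deriv).symm
  have hc0 : c' 0 = 0 := if_pos rfl
  have habel := sum_mul_eq_sub_integral_mul₀ c' hc0 x hf_diff hf_int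
  have hsum : ∀ N : ℕ, (∑ k ∈ Finset.Icc 0 N, c' k) = ∑ n ∈ Finset.Icc 1 N, f n := by
    intro N
    rw [Finset.Icc_eq_cons_Ioc (Nat.zero_le N), Finset.sum_cons, hc0, zero_add,
      ← Finset.Icc_add_one_left_eq_Ioc]
    exact Finset.sum_congr rfl fun n hn => if_neg (by
      have := (Finset.mem_Icc.mp hn).1; omega)
  have hsum2 : (∑ k ∈ Finset.Icc 0 ⌊x⌋₊, g k * c' k) =
      ∑ n ∈ Finset.Icc 1 ⌊x⌋₊, f n * Real.log (n:ℝ) ^ i := by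
    rw [Finset.Icc_eq_cons_Ioc (Nat.zero_le _), Finset.sum_cons, hc0, mul_zero, zero_add,
      ← Finset.Icc_add_one_left_eq_Ioc]
    refine Finset.sum_congr rfl fun n hn => ?_
    have h1 : c' n = f n := if_neg (by have := (Finset.mem_Icc.mp hn).1; omega)
    rw [h1, mul_comm]
  have hIoc : Set.Ioc (1:ℝ) x ⊆ Set.Ici 1 := fun t ht => le_of_lt ht.1
  have hIcongr : (∫ t in Set.Ioc (1:ℝ) x, deriv g t * (∑ k ∈ Finset.Icc 0 ⌊t⌋₊, c' k)) =
      ∫ t in Set.Ioc (1:ℝ) x,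
        ((i:ℝ) * Real.log t ^ (i-1) * t⁻¹ * (∑ j ∈ Finset.range (r + 1), c j * Real.log t ^ j)
          + (i:ℝ) * (Real.log t ^ (i-1) * R t / t)) := by
    refine setIntegral_congr_fun measurableSet_Ioc (fun t ht => ?_)
    have ht1 : (1:ℝ) ≤ t := le_of_lt ht.1
    have ht0 : (0:ℝ) < t := lt_of_lt_of_le one_pos ht1
    rw [(hg t ht0).deriv, hsum, hA t ht1, div_eq_mul_inv]
    ring
  have hψcont : ContinuousOn (fun t : ℝ => (i:ℝ) * Real.log t ^ (i-1) * t⁻¹ *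
      (∑ j ∈ Finset.range (r + 1), c j * Real.log t ^ j)) (Set.Icc (1:ℝ) x) := by
    refine hφcont.mul ?_
    refine continuousOn_finset_sum _ fun j _ => continuousOn_const.mul ?_
    intro t ht
    have ht0 : t ≠ 0 := ne_of_gt (lt_of_lt_of_le one_pos ht.1)
    exact ((Real.continuousAt_log ht0).pow _).continuousWithinAt
  have hψint : IntegrableOn (fun t : ℝ => (i:ℝ) * Real.log t ^ (i-1) * t⁻¹ *
      (∑ j ∈ Finset.range (r + 1), c j * Real.log t ^ j)) (Set.Ioc (1:ℝ) x) :=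
    (hψcont.integrableOn_Icc).mono_set Set.Ioc_subset_Icc_self
  have hhint : IntegrableOn (fun t : ℝ => (i:ℝ) * (Real.log t ^ (i-1) * R t / t))
      (Set.Ioc (1:ℝ) x) := (hHint.mono_set hIoc).const_mul _
  have hsplit : (∫ t in Set.Ioc (1:ℝ) x,
        ((i:ℝ) * Real.log t ^ (i-1) * t⁻¹ * (∑ j ∈ Finset.range (r + 1), c j * Real.log t ^ j)
          + (i:ℝ) * (Real.log t ^ (i-1) * R t / t))) =
      (∫ t in Set.Ioc (1:ℝ) x,
        (i:ℝ) * Real.log t ^ (i-1) * t⁻¹ * (∑ j ∈ Finset.range (r + 1), c j * Real.log t ^ j))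
      + (i:ℝ) * ∫ t in Set.Ioc (1:ℝ) x, Real.log t ^ (i-1) * R t / t := by
    rw [integral_add hψint hhint, integral_const_mul]
  have hFTC : (∫ t in Set.Ioc (1:ℝ) x,
      (i:ℝ) * Real.log t ^ (i-1) * t⁻¹ * (∑ j ∈ Finset.range (r + 1), c j * Real.log t ^ j)) =
      ∑ j ∈ Finset.range (r + 1),
        c j * ((i:ℝ) / ((j:ℝ) + (i:ℝ))) * Real.log x ^ (j + i) := by
    rw [← intervalIntegral.integral_of_le hx]
    have hder : ∀ t ∈ Set.uIcc (1:ℝ) x,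
        HasDerivAt (fun u => ∑ j ∈ Finset.range (r + 1),
          c j * ((i:ℝ) / ((j:ℝ) + (i:ℝ))) * Real.log u ^ (j + i))
        ((i:ℝ) * Real.log t ^ (i-1) * t⁻¹ *
          (∑ j ∈ Finset.range (r + 1), c j * Real.log t ^ j)) t := by
      rw [Set.uIcc_of_le hx]
      intro t ht
      have ht0 : (0:ℝ) < t := lt_of_lt_of_le one_pos ht.1
      have h := HasDerivAt.fun_sum (fun j (_ : j ∈ Finset.range (r + 1)) =>
        (((Real.hasDerivAt_log ht0.ne').pow (j + i)).const_mul
          (c j * ((i:ℝ) / ((j:ℝ) + (i:ℝ))))))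
      refine h.congr_deriv (Eq.symm ?_)
      rw [Finset.mul_sum]
      refine Finset.sum_congr rfl fun j _ => ?_
      have hji : (0:ℝ) < (j:ℝ) + (i:ℝ) := by positivity
      have hpow : Real.log t ^ (j + i - 1) = Real.log t ^ j * Real.log t ^ (i-1) := by
        rw [← pow_add]; congr 1; omega
      rw [Nat.cast_add, hpow]
      field_simp
    have hcont' : IntervalIntegrable (fun t : ℝ => (i:ℝ) * Real.log t ^ (i-1) * t⁻¹ *
        (∑ j ∈ Finset.range (r + 1), c j * Real.log t ^ j)) volume 1 x := by
      rw [intervalIntegrable_iff_integrableOn_Icc_of_le hx]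
      exact hψcont.integrableOn_Icc
    rw [intervalIntegral.integral_eq_sub_of_hasDerivAt hder hcont']
    have hF1 : (∑ j ∈ Finset.range (r + 1),
        c j * ((i:ℝ) / ((j:ℝ) + (i:ℝ))) * Real.log (1:ℝ) ^ (j + i)) = 0 :=
      Finset.sum_eq_zero fun j _ => by
        rw [Real.log_one, zero_pow (by omega), mul_zero]
    rw [hF1, sub_zero]
  rw [hsum2, hsum, hA x hx] at habel
  rw [habel, hIcongr, hsplit, hFTC]
  have hgP : g x * ((∑ j ∈ Finset.range (r + 1), c j * Real.log x ^ j) + R x) =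
      (∑ j ∈ Finset.range (r + 1), c j * Real.log x ^ (j + i)) + R x * Real.log x ^ i := by
    show Real.log x ^ i * _ = _
    rw [mul_add, Finset.mul_sum]
    congr 1
    · exact Finset.sum_congr rfl fun j _ => by rw [pow_add]; ring
    · ring
  rw [hgP]
  have hcomb : (∑ j ∈ Finset.range (r + 1), c j * Real.log x ^ (j + i)) -
      (∑ j ∈ Finset.range (r + 1),
        c j * ((i:ℝ) / ((j:ℝ) + (i:ℝ))) * Real.log x ^ (j + i)) =
      ∑ j ∈ Finset.range (r + 1),
        c j * (j : ℝ) / ((j : ℝ) + (i : ℝ)) * Real.log x ^ (j + i) := by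
    rw [← Finset.sum_sub_distrib]
    refine Finset.sum_congr rfl fun j _ => ?_
    have hji : (0:ℝ) < (j:ℝ) + (i:ℝ) := by positivity
    field_simp
    ring
  rw [← hcomb]
  ring

private lemma tail_integral_bound' (i : ℕ) (R : ℝ → ℝ) {C δ : ℝ} (hδ : 0 < δ) (hδ' : δ ≤ 1/8)
    (hC : 0 ≤ C)
    (hb : ∀ t : ℝ, 1 ≤ t → |Real.log t ^ (i - 1) * R t / t| ≤ C * t ^ (-3/2 + δ))
    {x : ℝ} (hx : 1 ≤ x) :
    ‖∫ t in Set.Ioi x, Real.log t ^ (i - 1) * R t / t‖ ≤ 3 * C * x ^ (-1/2 + δ) := by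
  have hx0 : (0:ℝ) < x := lt_of_lt_of_le one_pos hx
  have hlt : (-3/2 + δ : ℝ) < -1 := by linarith
  have hintg : IntegrableOn (fun t : ℝ => C * t ^ (-3/2 + δ)) (Set.Ioi x) :=
    (integrableOn_Ioi_rpow_of_lt hlt hx0).const_mul C
  have hIb : ‖∫ t in Set.Ioi x, Real.log t ^ (i - 1) * R t / t‖ ≤
      ∫ t in Set.Ioi x, C * t ^ (-3/2 + δ) := by
    refine norm_integral_le_of_norm_le hintg ?_
    rw [ae_restrict_iff' measurableSet_Ioi]
    exact ae_of_all _ fun t ht => by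
      rw [Real.norm_eq_abs]; exact hb t (le_trans hx (le_of_lt ht))
  refine hIb.trans ?_
  rw [integral_const_mul, integral_Ioi_rpow_of_lt hlt hx0]
  have hexp : (-3/2 + δ + 1 : ℝ) = -1/2 + δ := by ring
  rw [hexp]
  have hxp : (0:ℝ) < x ^ (-1/2 + δ : ℝ) := Real.rpow_pos_of_pos hx0 _
  have he : (-1/2 + δ : ℝ) < 0 := by linarith
  have key : -x ^ (-1/2 + δ : ℝ) / (-1/2 + δ) ≤ 3 * x ^ (-1/2 + δ : ℝ) := by
    rw [div_le_iff_of_neg he]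
    nlinarith
  calc C * (-x ^ (-1/2 + δ : ℝ) / (-1/2 + δ)) ≤ C * (3 * x ^ (-1/2 + δ : ℝ)) :=
        mul_le_mul_of_nonneg_left key hC
    _ = 3 * C * x ^ (-1/2 + δ : ℝ) := by ring

end SumMulLogAux

/-- The key computation inside Lemma 1: if
`A(x) = ∑_{n ≤ x} f n = ∑_{j=0}^r c_j (log x)^j + R(x)` with `R(x) = O(x^{-1/2+ε})` for
every `ε > 0`, then the integral `D_i = -i ∫_1^∞ (log t)^{i-1} R(t)/t dt` converges and
`∑_{n ≤ x} f n (log n)^i = ∑_{j=0}^r (c_j j/(j+i)) (log x)^{j+i} + D_i + O(x^{-1/2+ε})`. -/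
theorem sum_mul_log_n_pow_asymptotic (r i : ℕ) (hi : 1 ≤ i) (f : ℕ → ℝ) (c : ℕ → ℝ)
    (R : ℝ → ℝ)
    (hA : ∀ x : ℝ, 1 ≤ x → (∑ n ∈ Finset.Icc 1 ⌊x⌋₊, f n) =
      (∑ j ∈ Finset.range (r + 1), c j * Real.log x ^ j) + R x)
    (hR : ∀ ε > (0 : ℝ), R =O[atTop] fun x : ℝ => x ^ (-1 / 2 + ε)) :
    MeasureTheory.IntegrableOn (fun t : ℝ => Real.log t ^ (i - 1) * R t / t)
      (Set.Ici (1 : ℝ)) ∧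
    ∀ ε > (0 : ℝ),
      (fun x : ℝ => (∑ n ∈ Finset.Icc 1 ⌊x⌋₊, f n * Real.log (n : ℝ) ^ i) -
          ((∑ j ∈ Finset.range (r + 1),
              c j * (j : ℝ) / ((j : ℝ) + (i : ℝ)) * Real.log x ^ (j + i)) +
            (-(i : ℝ) * ∫ t in Set.Ici (1 : ℝ), Real.log t ^ (i - 1) * R t / t)))
        =O[atTop] fun x : ℝ => x ^ (-1 / 2 + ε) := by
    -- integrability
  have hmeas := Hmeas' i r f c R hA
  obtain ⟨K₀, hK₀, hL₀⟩ := logpow_bound' (i - 1) (show (0:ℝ) < (1/8)/2 by norm_num)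
  obtain ⟨C₀, hC₀, hRb₀⟩ := Rglobal' r f c R hA hR
    (show (0:ℝ) < (1/8)/2 by norm_num) (by norm_num)
  have hb₀ := Hbound' i R hK₀.le hRb₀ hL₀
  have hHint : MeasureTheory.IntegrableOn
      (fun t : ℝ => Real.log t ^ (i - 1) * R t / t) (Set.Ici (1 : ℝ)) :=
    Hint' i R (show (0:ℝ) < 1/8 by norm_num) (by norm_num) hb₀ hmeas
  refine ⟨hHint, ?_⟩
  intro ε hε
  set δ : ℝ := min ε (1/8) with hδdef
  have hδ0 : 0 < δ := lt_min hε (by norm_num)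
  have hδ8 : δ ≤ 1/8 := min_le_right _ _
  have hδε : δ ≤ ε := min_le_left _ _
  -- it suffices to prove the bound with exponent δ
  have hred : (fun x : ℝ => x ^ (-1/2 + δ)) =O[atTop] fun x : ℝ => x ^ (-1/2 + ε) := by
    refine Asymptotics.IsBigO.of_bound 1 ?_
    filter_upwards [eventually_ge_atTop (1:ℝ)] with x hx
    have hx0 : (0:ℝ) < x := lt_of_lt_of_le one_pos hx
    rw [one_mul, Real.norm_eq_abs, Real.norm_eq_abs,
      abs_of_pos (Real.rpow_pos_of_pos hx0 _), abs_of_pos (Real.rpow_pos_of_pos hx0 _)]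
    exact Real.rpow_le_rpow_of_exponent_le hx (by linarith)
  have hred' : (-1/2 + ε : ℝ) = -1 / 2 + ε := by norm_num
  rw [← hred']
  refine Asymptotics.IsBigO.trans ?_ hred
  -- constants
  obtain ⟨C₁, hC₁, hRb₁⟩ := Rglobal' r f c R hA hR
    (show (0:ℝ) < δ/2 by linarith) (by linarith)
  obtain ⟨K₁, hK₁, hL₁⟩ := logpow_bound' i (show (0:ℝ) < δ/2 by linarith)
  obtain ⟨K₂, hK₂, hL₂⟩ := logpow_bound' (i - 1) (show (0:ℝ) < δ/2 by linarith)
  have hb₂ := Hbound' i R hK₂.le hRb₁ hL₂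
  refine Asymptotics.IsBigO.of_bound (C₁ * K₁ + (i:ℝ) * (3 * (K₂ * C₁))) ?_
  filter_upwards [eventually_ge_atTop (1:ℝ)] with x hx
  have hx0 : (0:ℝ) < x := lt_of_lt_of_le one_pos hx
  have hxp : (0:ℝ) < x ^ (-1/2 + δ : ℝ) := Real.rpow_pos_of_pos hx0 _
  -- splitting the integral
  have hsub1 : Set.Ioc (1:ℝ) x ⊆ Set.Ici 1 := fun t ht => le_of_lt ht.1
  have hsub2 : Set.Ioi x ⊆ Set.Ici (1:ℝ) := fun t ht => le_trans hx (le_of_lt ht)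
  have hsplitI : (∫ t in Set.Ici (1:ℝ), Real.log t ^ (i - 1) * R t / t) =
      (∫ t in Set.Ioc (1:ℝ) x, Real.log t ^ (i - 1) * R t / t) +
      ∫ t in Set.Ioi x, Real.log t ^ (i - 1) * R t / t := by
    rw [MeasureTheory.integral_Ici_eq_integral_Ioi, ← Set.Ioc_union_Ioi_eq_Ioi hx,
      MeasureTheory.setIntegral_union Set.Ioc_disjoint_Ioi_same measurableSet_Ioi
        (hHint.mono_set hsub1) (hHint.mono_set hsub2)]
  have hid := main_identity' r i hi f c R hA hHint x hx
  have herr : (∑ n ∈ Finset.Icc 1 ⌊x⌋₊, f n * Real.log (n : ℝ) ^ i) -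
      ((∑ j ∈ Finset.range (r + 1),
          c j * (j : ℝ) / ((j : ℝ) + (i : ℝ)) * Real.log x ^ (j + i)) +
        (-(i : ℝ) * ∫ t in Set.Ici (1 : ℝ), Real.log t ^ (i - 1) * R t / t)) =
      R x * Real.log x ^ i + (i:ℝ) * ∫ t in Set.Ioi x, Real.log t ^ (i - 1) * R t / t := by
    rw [hid, hsplitI]; ring
  rw [herr]
  -- bound the two error terms
  have h1 : |R x * Real.log x ^ i| ≤ C₁ * K₁ * x ^ (-1/2 + δ : ℝ) := by
    rw [abs_mul, abs_pow, abs_of_nonneg (Real.log_nonneg hx)]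
    have := mul_le_mul (hRb₁ x hx) (hL₁ x hx)
      (pow_nonneg (Real.log_nonneg hx) _) (by positivity)
    refine this.trans (le_of_eq ?_)
    rw [mul_mul_mul_comm, ← Real.rpow_add hx0]
    congr 1
    ring
  have h2 : ‖∫ t in Set.Ioi x, Real.log t ^ (i - 1) * R t / t‖ ≤
      3 * (K₂ * C₁) * x ^ (-1/2 + δ : ℝ) :=
    tail_integral_bound' i R hδ0 hδ8 (by positivity) hb₂ hx
  rw [Real.norm_eq_abs, Real.norm_eq_abs]
  have habs : |x ^ (-1/2 + δ : ℝ)| = x ^ (-1/2 + δ : ℝ) := abs_of_pos hxp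
  calc |R x * Real.log x ^ i + (i:ℝ) * ∫ t in Set.Ioi x, Real.log t ^ (i - 1) * R t / t|
      ≤ |R x * Real.log x ^ i| +
        |(i:ℝ) * ∫ t in Set.Ioi x, Real.log t ^ (i - 1) * R t / t| := abs_add_le _ _
    _ ≤ C₁ * K₁ * x ^ (-1/2 + δ : ℝ) +
        (i:ℝ) * (3 * (K₂ * C₁) * x ^ (-1/2 + δ : ℝ)) := by
        refine add_le_add h1 ?_
        rw [abs_mul, Nat.abs_cast]
        exact mul_le_mul_of_nonneg_left (by rw [← Real.norm_eq_abs]; exact h2)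
          (Nat.cast_nonneg i)
    _ = (C₁ * K₁ + (i:ℝ) * (3 * (K₂ * C₁))) * x ^ (-1/2 + δ : ℝ) := by ring
    _ = (C₁ * K₁ + (i:ℝ) * (3 * (K₂ * C₁))) * |x ^ (-1/2 + δ : ℝ)| := by rw [habs]
end

section
/- Let $k \ge 1$ be an integer and let $f$ be an arithmetic function such that $\sum_{n \le x} \frac{f(n)}{n} = a (\log x)^k + b (\log x)^{k-1} + O((\log x)^{k-2})$ as $x \to \infty$, for some constants $a, b$. Then $\sum_{n \le x} f(n) = a\,k\, x (\log x)^{k-1} + O\big(x (\log x)^{k-2}\big)$ as $x \to \infty$. -/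
open Filter Finset

open MeasureTheory

lemma aux_Icc_Ioc (n : ℕ) : Icc 1 n = Ioc 0 n := by
  ext m; simp [Nat.lt_iff_add_one_le]

lemma aux_sum_eq (f : ℕ → ℝ) (x : ℝ) :
    ∑ n ∈ Icc 0 ⌊x⌋₊, f n / (n : ℝ) = ∑ n ∈ Icc 1 ⌊x⌋₊, f n / n := by
  rw [aux_Icc_Ioc, ← Finset.sum_Ioc_add_eq_sum_Icc (Nat.zero_le _)]
  simp

lemma aux_abel (f : ℕ → ℝ) (x : ℝ) (hx : 1 ≤ x) :
    ∑ n ∈ Icc 1 ⌊x⌋₊, f n =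
      x * (∑ n ∈ Icc 1 ⌊x⌋₊, f n / n) -
        ∫ t in Set.Ioc 0 x, (∑ n ∈ Icc 1 ⌊t⌋₊, f n / n) := by
  have := sum_mul_eq_sub_sub_integral_mul (𝕜 := ℝ) (fun n => f n / n) (f := fun t => t)
    (a := 0) (b := x) le_rfl (by linarith) (fun t _ => differentiableAt_fun_id)
    (by simpa using integrableOn_const (C := (1:ℝ)) (s := Set.Icc 0 x) (μ := volume))
  simp only [deriv_id'', one_mul, Nat.floor_zero, zero_mul, sub_zero] at this
  simp only [aux_sum_eq f] at this ⊢
  rw [← this, aux_Icc_Ioc]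
  refine Finset.sum_congr rfl fun n hn => ?_
  have hn1 : 1 ≤ n := (Finset.mem_Ioc.mp hn).1
  have : (n:ℝ) ≠ 0 := by positivity
  field_simp

lemma aux_stepInt (g : ℕ → ℝ) (c x : ℝ) :
    IntegrableOn (fun t => ∑ n ∈ Icc 1 ⌊t⌋₊, g n) (Set.Ioc c x) := by
  have hm : Measurable (fun t : ℝ => ∑ n ∈ Icc 1 ⌊t⌋₊, g n) :=
    (measurable_from_top (f := fun m : ℕ => ∑ n ∈ Icc 1 m, g n)).comp Nat.measurable_floor
  refine Measure.integrableOn_of_bounded (M := ∑ n ∈ Icc 1 ⌊x⌋₊, ‖g n‖) (measure_Ioc_lt_top).ne hm.aestronglyMeasurable ?_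
  refine (ae_restrict_iff' measurableSet_Ioc).mpr (ae_of_all _ fun t ht => ?_)
  calc ‖∑ n ∈ Icc 1 ⌊t⌋₊, g n‖ ≤ ∑ n ∈ Icc 1 ⌊t⌋₊, ‖g n‖ := norm_sum_le _ _
    _ ≤ ∑ n ∈ Icc 1 ⌊x⌋₊, ‖g n‖ := by
        refine Finset.sum_le_sum_of_subset_of_nonneg
          (Finset.Icc_subset_Icc le_rfl (Nat.floor_le_floor ht.2)) fun _ _ _ => norm_nonneg _
    _ ≤ ∑ n ∈ Icc 1 ⌊x⌋₊, ‖g n‖ := le_rfl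

lemma aux_logpow_intble (j : ℕ) {c x : ℝ} (hc : 0 < c) (hcx : c ≤ x) :
    IntervalIntegrable (fun t => Real.log t ^ j) volume c x := by
  apply ContinuousOn.intervalIntegrable
  apply ContinuousOn.pow
  apply Real.continuousOn_log.mono
  intro t ht
  rw [Set.uIcc_of_le hcx] at ht
  simpa using ne_of_gt (lt_of_lt_of_le hc ht.1)

lemma aux_Ilog_rec (j : ℕ) (x : ℝ) (hx : 1 ≤ x) :
    ∫ t in (1:ℝ)..x, Real.log t ^ (j+1)
      = x * Real.log x ^ (j+1) - (j+1) * ∫ t in (1:ℝ)..x, Real.log t ^ j := by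
  have key : ∫ t in (1:ℝ)..x, (Real.log t ^ (j+1) + (j+1) * Real.log t ^ j)
      = x * Real.log x ^ (j+1) := by
    rw [intervalIntegral.integral_eq_sub_of_hasDerivAt
      (f := fun t => t * Real.log t ^ (j+1)) ?_ ?_]
    · simp
    · intro t ht
      rw [Set.uIcc_of_le hx] at ht
      have ht0 : (0:ℝ) < t := lt_of_lt_of_le one_pos ht.1
      have h2 : HasDerivAt (fun t => Real.log t ^ (j+1))
          ((j+1 : ℕ) * Real.log t ^ j * t⁻¹) t := by
        simpa using (Real.hasDerivAt_log ht0.ne').fun_pow (j+1)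
      have h3 := (hasDerivAt_id t).mul h2
      refine h3.congr_deriv ?_
      have ht' : t * t⁻¹ = 1 := mul_inv_cancel₀ ht0.ne'
      simp only [id_eq, Nat.cast_add, Nat.cast_one]
      linear_combination (((j:ℝ)+1) * Real.log t ^ j) * ht'
    · exact ((aux_logpow_intble (j+1) one_pos hx).add
        (((aux_logpow_intble j one_pos hx).const_mul _)))
  have hadd : ∫ t in (1:ℝ)..x, (Real.log t ^ (j+1) + ((j:ℝ)+1) * Real.log t ^ j)
      = (∫ t in (1:ℝ)..x, Real.log t ^ (j+1)) + ((j:ℝ)+1) * ∫ t in (1:ℝ)..x, Real.log t ^ j := by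
    rw [intervalIntegral.integral_add (aux_logpow_intble (j+1) one_pos hx)
      ((aux_logpow_intble j one_pos hx).const_mul _), intervalIntegral.integral_const_mul]
  push_cast at key hadd ⊢
  linarith [key, hadd]

lemma aux_Ilog_bound (j : ℕ) (x : ℝ) (hx : 1 ≤ x) :
    |∫ t in (1:ℝ)..x, Real.log t ^ j| ≤ x * Real.log x ^ j := by
  have hlx : 0 ≤ Real.log x := Real.log_nonneg hx
  rw [intervalIntegral.integral_of_le hx, abs_le]
  constructor
  · have : (0:ℝ) ≤ ∫ t in Set.Ioc 1 x, Real.log t ^ j := by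
      apply setIntegral_nonneg measurableSet_Ioc
      intro t ht
      exact pow_nonneg (Real.log_nonneg ht.1.le) j
    nlinarith [pow_nonneg hlx j]
  · calc ∫ t in Set.Ioc 1 x, Real.log t ^ j
        ≤ ∫ _ in Set.Ioc 1 x, Real.log x ^ j := by
          apply setIntegral_mono_on
          · exact (aux_logpow_intble j one_pos hx).1
          · exact integrableOn_const measure_Ioc_lt_top.ne
          · exact measurableSet_Ioc
          · intro t ht
            exact pow_le_pow_left₀ (Real.log_nonneg ht.1.le)
              (Real.log_le_log (zero_lt_one.trans ht.1) ht.2) j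
      _ = (x - 1) * Real.log x ^ j := by
          simp [Real.volume_Ioc, ENNReal.toReal_ofReal (by linarith : (0:ℝ) ≤ x - 1), hx]
      _ ≤ x * Real.log x ^ j := by nlinarith [pow_nonneg hlx j]

lemma aux_P_intble (a b : ℝ) (j : ℕ) {x : ℝ} (hx : 1 ≤ x) :
    IntegrableOn (fun t => a * Real.log t ^ (j+1) + b * Real.log t ^ j) (Set.Ioc 1 x) :=
  (((aux_logpow_intble (j+1) one_pos hx).const_mul a).add
    ((aux_logpow_intble j one_pos hx).const_mul b)).1

lemma aux_P_val (a b : ℝ) (i : ℕ) (x : ℝ) (hx : 1 ≤ x) :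
    x * (a * Real.log x ^ (i+2) + b * Real.log x ^ (i+1))
      - (∫ t in Set.Ioc 1 x, (a * Real.log t ^ (i+2) + b * Real.log t ^ (i+1)))
      - a * ((i:ℝ)+2) * x * Real.log x ^ (i+1)
    = (b * ((i:ℝ)+1) - a * ((i:ℝ)+2) * ((i:ℝ)+1)) * ∫ t in (1:ℝ)..x, Real.log t ^ i := by
  rw [← intervalIntegral.integral_of_le hx,
      intervalIntegral.integral_add ((aux_logpow_intble _ one_pos hx).const_mul a)
        ((aux_logpow_intble _ one_pos hx).const_mul b),
      intervalIntegral.integral_const_mul, intervalIntegral.integral_const_mul]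
  have h1 := aux_Ilog_rec (i+1) x hx
  have h2 := aux_Ilog_rec i x hx
  push_cast at h1 h2 ⊢
  rw [show i+1+1 = i+2 from rfl] at h1
  rw [h1, h2]
  ring

lemma aux_P_val0 (a b : ℝ) (x : ℝ) (hx : 1 ≤ x) :
    x * (a * Real.log x ^ 1 + b * Real.log x ^ 0)
      - (∫ t in Set.Ioc 1 x, (a * Real.log t ^ 1 + b * Real.log t ^ 0))
      - a * 1 * x * Real.log x ^ 0
    = b - a := by
  rw [← intervalIntegral.integral_of_le hx,
      intervalIntegral.integral_add ((aux_logpow_intble _ one_pos hx).const_mul a)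
        ((aux_logpow_intble _ one_pos hx).const_mul b),
      intervalIntegral.integral_const_mul, intervalIntegral.integral_const_mul]
  have h1 := aux_Ilog_rec 0 x hx
  have h2 : ∫ t in (1:ℝ)..x, Real.log t ^ 0 = x - 1 := by simp
  rw [h2] at h1
  norm_num at h1 ⊢
  rw [h1]
  ring

lemma aux_log_le_sqrt {x : ℝ} (hx : 0 ≤ x) : Real.log x ≤ 2 * Real.sqrt x := by
  have := Real.log_le_rpow_div hx (by norm_num : (0:ℝ) < 1/2)
  rw [Real.sqrt_eq_rpow]
  linarith [this]

lemma aux_xdivlog : Tendsto (fun x : ℝ => x * (Real.log x)⁻¹) atTop atTop := by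
  have sqrtT : Tendsto Real.sqrt atTop atTop := by
    refine (tendsto_rpow_atTop (by norm_num : (0:ℝ) < 1/2)).congr' ?_
    filter_upwards [eventually_ge_atTop (0:ℝ)] with x _
    rw [Real.sqrt_eq_rpow]
  refine tendsto_atTop_mono' atTop ?_ (sqrtT.atTop_div_const two_pos)
  filter_upwards [eventually_ge_atTop (3:ℝ)] with x hx
  have hx0 : (0:ℝ) < x := by linarith
  have hlog : 0 < Real.log x := Real.log_pos (by linarith)
  have hs : 0 < Real.sqrt x := Real.sqrt_pos.mpr hx0
  have h1 : Real.log x ≤ 2 * Real.sqrt x := aux_log_le_sqrt hx0.le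
  have key : Real.sqrt x / 2 * Real.log x ≤ x := by
    calc Real.sqrt x / 2 * Real.log x ≤ Real.sqrt x / 2 * (2 * Real.sqrt x) := by
          apply mul_le_mul_of_nonneg_left h1 (by positivity)
      _ = Real.sqrt x * Real.sqrt x := by ring
      _ = x := Real.mul_self_sqrt hx0.le
  calc Real.sqrt x / 2 = (Real.sqrt x / 2 * Real.log x) / Real.log x := by field_simp
    _ ≤ x / Real.log x := div_le_div_of_nonneg_right key hlog.le
    _ = x * (Real.log x)⁻¹ := div_eq_mul_inv _ _

lemma aux_const_isBigO {g : ℝ → ℝ} (hg : Tendsto g atTop atTop) (c : ℝ) :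
    (fun _ : ℝ => c) =O[atTop] g := by
  refine Asymptotics.IsBigO.of_bound 1 ?_
  filter_upwards [hg.eventually_ge_atTop |c|] with x hx
  simpa using hx.trans (le_abs_self _)

lemma aux_zpow_intble (m : ℤ) {c x : ℝ} (hc : 1 < c) :
    IntegrableOn (fun t => Real.log t ^ m) (Set.Ioc c x) volume := by
  rcases le_or_gt c x with hcx | hcx
  · have hco : ContinuousOn (fun t => Real.log t ^ m) (Set.Icc c x) := by
      apply ContinuousOn.zpow₀
      · refine Real.continuousOn_log.mono fun t ht => ?_
        simp only [Set.mem_compl_iff, Set.mem_singleton_iff]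
        nlinarith [ht.1]
      · intro t ht
        exact Or.inl (Real.log_pos (lt_of_lt_of_le hc ht.1)).ne'
    exact (hco.integrableOn_Icc).mono_set Set.Ioc_subset_Icc_self
  · simp [Set.Ioc_eq_empty (not_lt.mpr hcx.le)]

lemma aux_intE (j : ℕ) (E : ℝ → ℝ) (hint : ∀ x : ℝ, IntegrableOn E (Set.Ioc 1 x))
    (hE : E =O[atTop] fun t => Real.log t ^ ((j:ℤ) - 1)) :
    (fun x => ∫ t in Set.Ioc 1 x, E t) =O[atTop] fun x => x * Real.log x ^ ((j:ℤ)-1) := by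
  obtain ⟨C, hC⟩ := hE.bound
  obtain ⟨X0, hX0⟩ := eventually_atTop.mp hC
  set X := max X0 3 with hXdef
  have hX3 : (3:ℝ) ≤ X := le_max_right _ _
  have hX1 : (1:ℝ) < X := by linarith
  have hlogX : 1 < Real.log X := (Real.lt_log_iff_exp_lt (by linarith)).mpr
    (lt_of_lt_of_le (Real.exp_one_lt_d9.trans_le (by norm_num)) hX3)
  have hbound : ∀ t, X ≤ t → |E t| ≤ |C| * Real.log t ^ ((j:ℤ)-1) := by
    intro t ht
    have h1 := hX0 t (le_trans (le_max_left _ _) ht)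
    have hlt : 1 < Real.log t :=
      lt_of_lt_of_le hlogX (Real.log_le_log (by linarith) ht)
    have hpos : 0 < Real.log t ^ ((j:ℤ)-1) := zpow_pos (by linarith) _
    rw [Real.norm_eq_abs, Real.norm_eq_abs, abs_of_pos hpos] at h1
    exact h1.trans (mul_le_mul_of_nonneg_right (le_abs_self C) hpos.le)
  set M := ∫ t in Set.Ioc 1 X, |E t| with hMdef
  have hM0 : 0 ≤ M := setIntegral_nonneg measurableSet_Ioc fun t _ => abs_nonneg _
  have hsplit : ∀ x, X ≤ x → |∫ t in Set.Ioc 1 x, E t|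
      ≤ M + |C| * ∫ t in Set.Ioc X x, Real.log t ^ ((j:ℤ)-1) := by
    intro x hx
    have hIE1 : IntegrableOn E (Set.Ioc 1 X) := hint X
    have hIE2 : IntegrableOn E (Set.Ioc X x) :=
      (hint x).mono_set (Set.Ioc_subset_Ioc hX1.le le_rfl)
    have hIz : IntegrableOn (fun t => Real.log t ^ ((j:ℤ)-1)) (Set.Ioc X x) :=
      aux_zpow_intble _ hX1
    have hunion : ∫ t in Set.Ioc 1 x, E t
        = (∫ t in Set.Ioc 1 X, E t) + ∫ t in Set.Ioc X x, E t := by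
      rw [← setIntegral_union (Set.Ioc_disjoint_Ioc_of_le le_rfl) measurableSet_Ioc hIE1 hIE2,
        Set.Ioc_union_Ioc_eq_Ioc hX1.le hx]
    calc |∫ t in Set.Ioc 1 x, E t|
        ≤ |∫ t in Set.Ioc 1 X, E t| + |∫ t in Set.Ioc X x, E t| := hunion ▸ abs_add_le _ _
      _ ≤ M + ∫ t in Set.Ioc X x, |E t| := by
          refine add_le_add ?_ ?_
          · simpa [Real.norm_eq_abs] using
              norm_integral_le_integral_norm (μ := volume.restrict (Set.Ioc 1 X)) E
          · simpa [Real.norm_eq_abs] using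
              norm_integral_le_integral_norm (μ := volume.restrict (Set.Ioc X x)) E
      _ ≤ M + ∫ t in Set.Ioc X x, |C| * Real.log t ^ ((j:ℤ)-1) := by
          refine add_le_add_right ?_ M
          exact setIntegral_mono_on hIE2.abs (hIz.const_mul _) measurableSet_Ioc
            fun t ht => hbound t ht.1.le
      _ = M + |C| * ∫ t in Set.Ioc X x, Real.log t ^ ((j:ℤ)-1) := by
          rw [integral_const_mul]
  rcases j with _ | i
  · -- j = 0 : exponent is -1
    simp only [Nat.cast_zero, zero_sub, zpow_neg_one] at hsplit ⊢
    rw [Asymptotics.isBigO_iff]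
    refine ⟨1 + 4 * |C|, ?_⟩
    have hxdl := aux_xdivlog
    filter_upwards [eventually_ge_atTop (X^2), eventually_ge_atTop (max 3 X),
      hxdl.eventually_ge_atTop M] with x hx2 hx3X hMx
    have hx3 : (3:ℝ) ≤ x := le_trans (le_max_left _ _) hx3X
    have hxX : X ≤ x := le_trans (le_max_right _ _) hx3X
    have h1x : (1:ℝ) ≤ x := by linarith
    have hlogx : 1 < Real.log x := (Real.lt_log_iff_exp_lt (by linarith)).mpr
      (lt_of_lt_of_le (Real.exp_one_lt_d9.trans_le (by norm_num)) hx3)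
    have hsX : X ≤ Real.sqrt x := (Real.le_sqrt' (by linarith)).mpr hx2
    have hs1 : 1 < Real.sqrt x := lt_of_lt_of_le hX1 hsX
    have hsx_le : Real.sqrt x ≤ x := (Real.sqrt_le_left (by linarith)).mpr (by nlinarith)
    have hlogs : 0 < Real.log (Real.sqrt x) := Real.log_pos hs1
    have hint1 : IntegrableOn (fun t => (Real.log t)⁻¹) (Set.Ioc X (Real.sqrt x)) := by
      have := aux_zpow_intble (-1) (x := Real.sqrt x) hX1
      simpa [zpow_neg_one] using this
    have hint2 : IntegrableOn (fun t => (Real.log t)⁻¹) (Set.Ioc (Real.sqrt x) x) := by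
      have := aux_zpow_intble (-1) (x := x) hs1
      simpa [zpow_neg_one] using this
    have e1 : ∫ t in Set.Ioc X (Real.sqrt x), (Real.log t)⁻¹
        ≤ (Real.sqrt x - X) * (Real.log X)⁻¹ := by
      calc ∫ t in Set.Ioc X (Real.sqrt x), (Real.log t)⁻¹
          ≤ ∫ _ in Set.Ioc X (Real.sqrt x), (Real.log X)⁻¹ := by
            refine setIntegral_mono_on hint1
              (integrableOn_const measure_Ioc_lt_top.ne) measurableSet_Ioc ?_
            intro t ht
            exact inv_anti₀ (by linarith) (Real.log_le_log (by linarith) ht.1.le)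
        _ = (Real.sqrt x - X) * (Real.log X)⁻¹ := by
            rw [setIntegral_const, Real.volume_real_Ioc_of_le (by linarith), smul_eq_mul]
    have e2 : ∫ t in Set.Ioc (Real.sqrt x) x, (Real.log t)⁻¹
        ≤ (x - Real.sqrt x) * (Real.log (Real.sqrt x))⁻¹ := by
      calc ∫ t in Set.Ioc (Real.sqrt x) x, (Real.log t)⁻¹
          ≤ ∫ _ in Set.Ioc (Real.sqrt x) x, (Real.log (Real.sqrt x))⁻¹ := by
            refine setIntegral_mono_on hint2
              (integrableOn_const measure_Ioc_lt_top.ne) measurableSet_Ioc ?_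
            intro t ht
            exact inv_anti₀ hlogs (Real.log_le_log (by linarith) ht.1.le)
        _ = (x - Real.sqrt x) * (Real.log (Real.sqrt x))⁻¹ := by
            rw [setIntegral_const, Real.volume_real_Ioc_of_le (by linarith), smul_eq_mul]
    have eunion : ∫ t in Set.Ioc X x, (Real.log t)⁻¹
        = (∫ t in Set.Ioc X (Real.sqrt x), (Real.log t)⁻¹)
          + ∫ t in Set.Ioc (Real.sqrt x) x, (Real.log t)⁻¹ := by
      rw [← setIntegral_union (Set.Ioc_disjoint_Ioc_of_le le_rfl) measurableSet_Ioc hint1 hint2,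
        Set.Ioc_union_Ioc_eq_Ioc hsX hsx_le]
    have hsqb : Real.sqrt x * Real.log x ≤ 2 * x := by
      have h1 : Real.log x ≤ 2 * Real.sqrt x := aux_log_le_sqrt (by linarith)
      have h2 : Real.sqrt x * Real.sqrt x = x := Real.mul_self_sqrt (by linarith)
      nlinarith [Real.sqrt_nonneg x]
    have hsq2 : Real.sqrt x ≤ 2 * (x * (Real.log x)⁻¹) := by
      rw [← mul_le_mul_iff_of_pos_right (show (0:ℝ) < Real.log x by linarith)]
      calc Real.sqrt x * Real.log x ≤ 2 * x := hsqb
        _ = 2 * (x * (Real.log x)⁻¹) * Real.log x := by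
            field_simp
    have hlogXinv : (Real.log X)⁻¹ ≤ 1 := by
      rw [inv_le_one_iff₀]; right; linarith
    have hbig : ∫ t in Set.Ioc X x, (Real.log t)⁻¹ ≤ 4 * (x * (Real.log x)⁻¹) := by
      have hv : (Real.log (Real.sqrt x))⁻¹ = 2 * (Real.log x)⁻¹ := by
        rw [Real.log_sqrt (by linarith)]
        field_simp
      have t1 : (Real.sqrt x - X) * (Real.log X)⁻¹ ≤ Real.sqrt x := by
        have h0 : 0 ≤ Real.sqrt x - X := by linarith
        calc (Real.sqrt x - X) * (Real.log X)⁻¹ ≤ (Real.sqrt x - X) * 1 :=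
              mul_le_mul_of_nonneg_left hlogXinv h0
          _ ≤ Real.sqrt x := by linarith
      have t2 : (x - Real.sqrt x) * (Real.log (Real.sqrt x))⁻¹
          ≤ 2 * (x * (Real.log x)⁻¹) := by
        rw [hv]
        have hxinv : 0 ≤ (Real.log x)⁻¹ := by positivity
        have : (x - Real.sqrt x) * (2 * (Real.log x)⁻¹) ≤ x * (2 * (Real.log x)⁻¹) := by
          apply mul_le_mul_of_nonneg_right _ (by positivity)
          linarith [Real.sqrt_nonneg x]
        linarith [this]
      rw [eunion]
      calc (∫ t in Set.Ioc X (Real.sqrt x), (Real.log t)⁻¹)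
            + ∫ t in Set.Ioc (Real.sqrt x) x, (Real.log t)⁻¹
          ≤ (Real.sqrt x - X) * (Real.log X)⁻¹
            + (x - Real.sqrt x) * (Real.log (Real.sqrt x))⁻¹ := add_le_add e1 e2
        _ ≤ Real.sqrt x + 2 * (x * (Real.log x)⁻¹) := add_le_add t1 t2
        _ ≤ 2 * (x * (Real.log x)⁻¹) + 2 * (x * (Real.log x)⁻¹) := by linarith [hsq2]
        _ = 4 * (x * (Real.log x)⁻¹) := by ring
    have hpos : 0 < x * (Real.log x)⁻¹ := by positivity
    rw [Real.norm_eq_abs, Real.norm_eq_abs, abs_of_pos hpos]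
    calc |∫ t in Set.Ioc 1 x, E t|
        ≤ M + |C| * ∫ t in Set.Ioc X x, (Real.log t)⁻¹ := hsplit x hxX
      _ ≤ M + |C| * (4 * (x * (Real.log x)⁻¹)) := by
          refine add_le_add_right (mul_le_mul_of_nonneg_left hbig (abs_nonneg C)) M
      _ ≤ x * (Real.log x)⁻¹ + 4 * |C| * (x * (Real.log x)⁻¹) := by
          refine add_le_add hMx (by ring_nf; rfl)
      _ = (1 + 4 * |C|) * (x * (Real.log x)⁻¹) := by ring
  · -- j = i + 1
    have hm : ((i+1:ℕ):ℤ) - 1 = (i:ℤ) := by push_cast; ring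
    simp only [hm, zpow_natCast] at hsplit ⊢
    have tendT : Tendsto (fun x : ℝ => x * Real.log x ^ i) atTop atTop := by
      refine tendsto_atTop_mono' atTop ?_ tendsto_id
      filter_upwards [eventually_ge_atTop (3:ℝ)] with x hx
      have hl1 : 1 ≤ Real.log x := le_of_lt <| (Real.lt_log_iff_exp_lt (by linarith)).mpr
        (lt_of_lt_of_le (Real.exp_one_lt_d9.trans_le (by norm_num)) hx)
      have : (1:ℝ) ≤ Real.log x ^ i := one_le_pow₀ hl1
      calc (id x : ℝ) = x * 1 := (mul_one x).symm
        _ ≤ x * Real.log x ^ i := by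
            apply mul_le_mul_of_nonneg_left this (by linarith)
    rw [Asymptotics.isBigO_iff]
    refine ⟨1 + |C|, ?_⟩
    filter_upwards [eventually_ge_atTop X, tendT.eventually_ge_atTop M] with x hxX hMx
    have h1x : (1:ℝ) ≤ x := by linarith
    have hlog0 : 0 ≤ Real.log x := Real.log_nonneg h1x
    have hIb : ∫ t in Set.Ioc X x, Real.log t ^ i ≤ x * Real.log x ^ i := by
      have hsub : ∫ t in Set.Ioc X x, Real.log t ^ i ≤ ∫ t in Set.Ioc 1 x, Real.log t ^ i := by
        refine setIntegral_mono_set (aux_logpow_intble i one_pos h1x).1 ?_ ?_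
        · refine (ae_restrict_iff' measurableSet_Ioc).mpr (ae_of_all _ fun t ht => ?_)
          exact pow_nonneg (Real.log_nonneg ht.1.le) i
        · exact HasSubset.Subset.eventuallyLE (Set.Ioc_subset_Ioc hX1.le le_rfl)
      refine hsub.trans ?_
      rw [← intervalIntegral.integral_of_le h1x]
      exact (abs_le.mp (aux_Ilog_bound i x h1x)).2
    have hT0 : 0 ≤ x * Real.log x ^ i := by positivity
    rw [Real.norm_eq_abs, Real.norm_eq_abs, abs_of_nonneg hT0]
    calc |∫ t in Set.Ioc 1 x, E t|
        ≤ M + |C| * ∫ t in Set.Ioc X x, Real.log t ^ i := hsplit x hxX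
      _ ≤ M + |C| * (x * Real.log x ^ i) := by
          refine add_le_add_right (mul_le_mul_of_nonneg_left hIb (abs_nonneg C)) M
      _ ≤ x * Real.log x ^ i + |C| * (x * Real.log x ^ i) := add_le_add hMx le_rfl
      _ = (1 + |C|) * (x * Real.log x ^ i) := by ring

/-- If `∑_{n ≤ x} f n / n = a (log x)^k + b (log x)^{k-1}
  + O((log x)^{k-2})`, then `∑_{n ≤ x} f n = a k x (log x)^{k-1} + O(x (log x)^{k-2})`. -/
theorem sum_from_sum_div (k : ℕ) (hk : 1 ≤ k) (f : ℕ → ℝ) (a b : ℝ)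
    (h : (fun x : ℝ => (∑ n ∈ Finset.Icc 1 ⌊x⌋₊, f n / n) -
          (a * Real.log x ^ k + b * Real.log x ^ (k - 1)))
        =O[atTop] fun x : ℝ => Real.log x ^ ((k : ℤ) - 2)) :
    (fun x : ℝ => (∑ n ∈ Finset.Icc 1 ⌊x⌋₊, f n) -
        a * (k : ℝ) * x * Real.log x ^ (k - 1))
      =O[atTop] fun x : ℝ => x * Real.log x ^ ((k : ℤ) - 2) := by
  obtain ⟨j, rfl⟩ : ∃ j, k = j + 1 := ⟨k - 1, by omega⟩
  simp only [Nat.add_sub_cancel] at h ⊢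
  have hexp : ((j+1:ℕ):ℤ) - 2 = (j:ℤ) - 1 := by push_cast; ring
  rw [hexp] at h ⊢
  -- integrability of the error function
  have hintE : ∀ x : ℝ, IntegrableOn
      (fun t => (∑ n ∈ Icc 1 ⌊t⌋₊, f n / n)
        - (a * Real.log t ^ (j+1) + b * Real.log t ^ j)) (Set.Ioc 1 x) := by
    intro x
    rcases le_or_gt 1 x with hx | hx
    · exact (aux_stepInt (fun n => f n / n) 1 x).sub (aux_P_intble a b j hx)
    · rw [Set.Ioc_eq_empty (not_lt.mpr hx.le)]
      exact integrableOn_empty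
  have h1 : (fun x : ℝ => x * ((∑ n ∈ Icc 1 ⌊x⌋₊, f n / n)
      - (a * Real.log x ^ (j+1) + b * Real.log x ^ j)))
      =O[atTop] fun x => x * Real.log x ^ ((j:ℤ)-1) :=
    (Asymptotics.isBigO_refl (fun x : ℝ => x) atTop).mul h
  have h2 := aux_intE j _ hintE h
  have h3 : (fun x : ℝ => x * (a * Real.log x ^ (j+1) + b * Real.log x ^ j)
      - (∫ t in Set.Ioc 1 x, (a * Real.log t ^ (j+1) + b * Real.log t ^ j))
      - a * ((j+1:ℕ):ℝ) * x * Real.log x ^ j)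
      =O[atTop] fun x => x * Real.log x ^ ((j:ℤ)-1) := by
    rcases j with _ | i
    · simp only [Nat.cast_zero, zero_sub, zpow_neg_one]
      refine ((aux_const_isBigO aux_xdivlog (b - a)).congr' ?_ EventuallyEq.rfl)
      filter_upwards [eventually_ge_atTop (1:ℝ)] with x hx
      have := aux_P_val0 a b x hx
      norm_num at this ⊢
      linarith [this]
    · rw [Asymptotics.isBigO_iff]
      refine ⟨|b * ((i:ℝ)+1) - a * ((i:ℝ)+2) * ((i:ℝ)+1)|, ?_⟩
      filter_upwards [eventually_ge_atTop (1:ℝ)] with x hx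
      have hval := aux_P_val a b i x hx
      have hpos : 0 ≤ x * Real.log x ^ i := by
        have := Real.log_nonneg hx
        positivity
      have hcast : ((i+1+1:ℕ):ℝ) = (i:ℝ) + 2 := by push_cast; ring
      have hexp2 : (((i+1:ℕ)):ℤ) - 1 = (i:ℤ) := by push_cast; ring
      rw [hexp2, zpow_natCast, Real.norm_eq_abs, Real.norm_eq_abs, abs_of_nonneg hpos]
      rw [show i+1+1 = i+2 from rfl, hcast, hval, abs_mul]
      refine mul_le_mul_of_nonneg_left ?_ (abs_nonneg _)
      exact aux_Ilog_bound i x hx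
  have hfinal := (h1.add h3).sub h2
  refine hfinal.congr' ?_ EventuallyEq.rfl
  filter_upwards [eventually_ge_atTop (1:ℝ)] with x hx
  have habel := aux_abel f x hx
  have hsplit0 : ∫ t in Set.Ioc 0 x, (∑ n ∈ Icc 1 ⌊t⌋₊, f n / n)
      = ∫ t in Set.Ioc 1 x, (∑ n ∈ Icc 1 ⌊t⌋₊, f n / n) := by
    rw [← Set.Ioc_union_Ioc_eq_Ioc zero_le_one hx,
      setIntegral_union (Set.Ioc_disjoint_Ioc_of_le le_rfl) measurableSet_Ioc
        (aux_stepInt (fun n => f n / n) 0 1) (aux_stepInt (fun n => f n / n) 1 x)]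
    have : ∫ t in Set.Ioc (0:ℝ) 1, (∑ n ∈ Icc 1 ⌊t⌋₊, f n / n) = 0 := by
      rw [integral_Ioc_eq_integral_Ioo]
      rw [setIntegral_congr_fun measurableSet_Ioo
        (g := fun _ => (0:ℝ)) fun t ht => ?_]
      · simp
      · have : ⌊t⌋₊ = 0 := Nat.floor_eq_zero.mpr ht.2
        simp [this]
    rw [this, zero_add]
  have hadd : ∫ t in Set.Ioc 1 x, (∑ n ∈ Icc 1 ⌊t⌋₊, f n / n)
      = (∫ t in Set.Ioc 1 x, (a * Real.log t ^ (j+1) + b * Real.log t ^ j))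
        + ∫ t in Set.Ioc 1 x, ((∑ n ∈ Icc 1 ⌊t⌋₊, f n / n)
            - (a * Real.log t ^ (j+1) + b * Real.log t ^ j)) := by
    rw [← integral_add (aux_P_intble a b j hx) (hintE x)]
    congr 1
    ext t
    ring
  rw [habel, hsplit0, hadd]
  ring
end
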